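/- Define a map from permutations of {1,...,n} to words of length n over the alphabet {U, H, D} by: position i is U if π(i) > i and π⁻¹(i) > i, position i is D if π(i) < i and π⁻¹(i) < i, and position i is H otherwise. Then for every permutation π of {1,...,n}, the resulting word is a Motzkin path of width n and area D(π)/2, and for every Motzkin path mz of width n, the number of permutations π of {1,...,n} mapping to mz is exactly ω(mz). -/

import Mathlib

/-- Moves of a Motzkin path: Up-right, Horizontal-right, Down-right. -/
inductive Move : Type
  | U : Move
  | H : Move
  | D : Move
deriving DecidableEq

open Move

/-- The vertical step of a move. -/
def Move.step : Move → ℤ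
  | U => 1
  | H => 0
  | D => -1

/-- The height of a path after its first `i` moves. -/
def heightAt (mz : List Move) (i : ℕ) : ℤ :=
  ((mz.take i).map Move.step).sum

/-- A word over {U,H,D} is a Motzkin path if it never goes below the x-axis
and ends on the x-axis. -/
def IsMotzkin (mz : List Move) : Prop :=
  (∀ i, 0 ≤ heightAt mz i) ∧ heightAt mz mz.length = 0

/-- The area between the x-axis and the path (sum of heights at integer points). -/
def area (mz : List Move) : ℤ :=
  ∑ i ∈ Finset.range (mz.length + 1), heightAt mz i

/-- `MZ n A` is the set of Motzkin paths of width `n` and area `A`. -/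
def MZ (n A : ℕ) : Set (List Move) :=
  {mz | mz.length = n ∧ IsMotzkin mz ∧ area mz = A}

/-- The weight `ω_i` of the `i`-th move (0-indexed): it is `h_i` for U and D moves
(height after the move for U, before the move for D) and `2h_i + 1` for H moves. -/
def moveWeight (mz : List Move) (i : ℕ) : ℤ :=
  match mz[i]? with
  | some U => heightAt mz (i + 1)
  | some D => heightAt mz i
  | some H => 2 * heightAt mz i + 1
  | none => 1

/-- The weight `ω(mz)` of a Motzkin path. -/
def weight (mz : List Move) : ℤ :=
  ∏ i ∈ Finset.range mz.length, moveWeight mz i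

/-- The total displacement `D(π) = Σ_i |i - π(i)|` of a permutation. -/
def totalDisp {n : ℕ} (π : Equiv.Perm (Fin n)) : ℤ :=
  ∑ i : Fin n, |((π i : ℕ) : ℤ) - ((i : ℕ) : ℤ)|

/-- The word over {U,H,D} associated to a permutation. -/
def toPath {n : ℕ} (π : Equiv.Perm (Fin n)) : List Move :=
  (List.finRange n).map fun i : Fin n =>
    if (i : ℕ) < (π i : ℕ) ∧ (i : ℕ) < (π.symm i : ℕ) then U
    else if (π i : ℕ) < (i : ℕ) ∧ (π.symm i : ℕ) < (i : ℕ) then D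
    else H

/-- The last fall length: the length of the maximal suffix consisting of D moves. -/
def lastFall (mz : List Move) : ℕ :=
  (mz.reverse.takeWhile (fun m => decide (m = D))).length

/-- The maximum height of a path. -/
def maxHeight (mz : List Move) : ℕ :=
  (Finset.range (mz.length + 1)).sup fun i => (heightAt mz i).toNat

/-- `flatsAt mz k` is the number of H moves of `mz` made at height `k`. -/
def flatsAt (mz : List Move) (k : ℕ) : ℕ :=
  ((Finset.range mz.length).filter fun j => mz[j]? = some H ∧ heightAt mz j = (k : ℤ)).card

/-- `peaksAt mz k` is the number of U moves of `mz` ending at height `k`. -/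
def peaksAt (mz : List Move) (k : ℕ) : ℕ :=
  ((Finset.range mz.length).filter fun j => mz[j]? = some U ∧ heightAt mz (j + 1) = (k : ℤ)).card

/-- `downsAt mz k` is the number of D moves of `mz` starting at height `k`. -/
def downsAt (mz : List Move) (k : ℕ) : ℕ :=
  ((Finset.range mz.length).filter fun j => mz[j]? = some D ∧ heightAt mz j = (k : ℤ)).card

/-- A candidate building sequence `(f_0, p_1, f_1, …, p_h, f_h)`, recorded as its
height `h` together with the flat counts `f` and peak counts `p`. -/
structure BSeq where
  h : ℕ
  f : ℕ → ℕ
  p : ℕ → ℕ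

/-- `Sset n A` is the set of building sequences for width `n` and area `A`:
all `p`-entries `p_1, …, p_h` are positive, entries beyond the height are zero, and the
width and area conditions hold. -/
def Sset (n A : ℕ) : Set BSeq :=
  {a | (∀ i, 1 ≤ i → i ≤ a.h → 0 < a.p i) ∧
       a.p 0 = 0 ∧
       (∀ i, a.h < i → a.p i = 0) ∧
       (∀ i, a.h < i → a.f i = 0) ∧
       (∑ i ∈ Finset.range (a.h + 1), a.f i) + 2 * (∑ i ∈ Finset.Icc 1 a.h, a.p i) = n ∧
       (∑ i ∈ Finset.range (a.h + 1), i * a.f i) +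
         (∑ i ∈ Finset.Icc 1 a.h, (2 * i - 1) * a.p i) = A}

/-- `mz` has building sequence `a`. -/
def hasBuildSeq (mz : List Move) (a : BSeq) : Prop :=
  maxHeight mz = a.h ∧ (∀ i, flatsAt mz i = a.f i) ∧ (∀ i, peaksAt mz i = a.p i)

/-- `perm(a) = ∏_{i=0}^h (2i+1)^{f_i} · ∏_{i=1}^h i^{2p_i}`. -/
def permWeight (a : BSeq) : ℕ :=
  (∏ i ∈ Finset.range (a.h + 1), (2 * i + 1) ^ a.f i) *
    ∏ i ∈ Finset.Icc 1 a.h, i ^ (2 * a.p i)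

/-- `m(a)`, the number of Motzkin paths with building sequence `a`. -/
def mcount (a : BSeq) : ℕ :=
  Nat.choose (a.f a.h + a.p a.h - 1) (a.p a.h - 1) *
    (∏ i ∈ Finset.Icc 1 (a.h - 1),
      Nat.choose (a.p (i + 1) + a.f i) (a.f i) *
        Nat.choose (a.p (i + 1) + a.f i + a.p i - 1) (a.p i - 1)) *
    Nat.choose (a.p 1 + a.f 0) (a.f 0)

/-- `M(n,A,l)`: the number of Motzkin paths of width `n`, area `A` and last fall length `l`
(for negative arguments there are no such paths, so the value is `0`; the value at
`(0,0,0)` is `1`, counting the empty path). -/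
noncomputable def Mcount (n A l : ℤ) : ℕ :=
  Nat.card {mz : List Move // (mz.length : ℤ) = n ∧ IsMotzkin mz ∧ area mz = A ∧
    (lastFall mz : ℤ) = l}

/-- `D(n,d,l)`: the sum of the weights of all Motzkin paths of width `n`, area `d` and
last fall length `l`. -/
noncomputable def Dw (n d l : ℤ) : ℤ :=
  ∑ᶠ mz ∈ {mz : List Move | (mz.length : ℤ) = n ∧ IsMotzkin mz ∧ area mz = d ∧
    (lastFall mz : ℤ) = l}, weight mz

/-- `M(n,A,h,p)`: the number of Motzkin paths of width `n`, area `A`, maximum height `h`,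
with exactly `p` U-moves ending at height `h` and no H-moves at height `h`. -/
noncomputable def Mtop (n A h p : ℤ) : ℕ :=
  Nat.card {mz : List Move // (mz.length : ℤ) = n ∧ IsMotzkin mz ∧ area mz = A ∧
    (maxHeight mz : ℤ) = h ∧ (peaksAt mz h.toNat : ℤ) = p ∧ flatsAt mz h.toNat = 0}

/-- `D(n,d,h,p)`: the sum of weights of Motzkin paths of width `n`, area `d`,
maximum height `h`, with exactly `p` U-moves ending at height `h` and no H-moves at height `h`. -/
noncomputable def Dtop (n d h p : ℤ) : ℤ :=
  ∑ᶠ mz ∈ {mz : List Move | (mz.length : ℤ) = n ∧ IsMotzkin mz ∧ area mz = d ∧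
    (maxHeight mz : ℤ) = h ∧ (peaksAt mz h.toNat : ℤ) = p ∧ flatsAt mz h.toNat = 0}, weight mz

/-- The area under the first `i` moves of a path (trapezoid rule; may be a half-integer). -/
def prefixArea (mz : List Move) (i : ℕ) : ℚ :=
  ∑ j ∈ Finset.range i, ((heightAt mz j : ℚ) + (heightAt mz (j + 1) : ℚ)) / 2

-- basic lemmas
lemma heightAt_zero (w : List Move) : heightAt w 0 = 0 := rfl

lemma heightAt_succ (w : List Move) (i : ℕ) :
    heightAt w (i + 1) = heightAt w i + (w[i]?.elim 0 Move.step) := by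
  rw [heightAt, heightAt, List.take_succ, List.map_append, List.sum_append]
  congr 1
  cases h : w[i]? <;> simp [h]

lemma heightAt_of_len_le (w : List Move) {i : ℕ} (h : w.length ≤ i) :
    heightAt w i = heightAt w w.length := by
  rw [heightAt, heightAt, List.take_of_length_le h, List.take_length]

lemma toPath_length {n : ℕ} (π : Equiv.Perm (Fin n)) : (toPath π).length = n := by
  simp [toPath]

def moveRule {n : ℕ} (π : Equiv.Perm (Fin n)) (i : Fin n) : Move :=
  if (i : ℕ) < (π i : ℕ) ∧ (i : ℕ) < (π.symm i : ℕ) then U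
  else if (π i : ℕ) < (i : ℕ) ∧ (π.symm i : ℕ) < (i : ℕ) then D
  else H

lemma toPath_getElem {n : ℕ} (π : Equiv.Perm (Fin n)) (i : ℕ) (hi : i < n) :
    (toPath π)[i]? = some (moveRule π ⟨i, hi⟩) := by
  rw [toPath, List.getElem?_map]
  rw [List.getElem?_eq_getElem (by simpa using hi)]
  simp only [Option.map_some, Option.some.injEq, List.getElem_finRange, moveRule]
  congr 1

def Vset {n : ℕ} (π : Equiv.Perm (Fin n)) (i : ℕ) : Finset (Fin n) :=
  Finset.univ.filter fun j => (j : ℕ) < i ∧ i ≤ (π j : ℕ)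

lemma Vset_zero {n : ℕ} (π : Equiv.Perm (Fin n)) : Vset π 0 = ∅ := by
  simp [Vset]

lemma Vset_of_le {n : ℕ} (π : Equiv.Perm (Fin n)) {i : ℕ} (h : n ≤ i) : Vset π i = ∅ := by
  ext j
  simp only [Vset, Finset.mem_filter, Finset.mem_univ, true_and, Finset.notMem_empty, iff_false]
  rintro ⟨-, h2⟩
  exact absurd (lt_of_lt_of_le (π j).isLt h) (not_lt.mpr h2)

lemma Vset_succ {n : ℕ} (π : Equiv.Perm (Fin n)) (i : ℕ) (hi : i < n) :
    Vset π (i + 1) =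
      (if (i : ℕ) < (π ⟨i, hi⟩ : ℕ) then {(⟨i, hi⟩ : Fin n)} else ∅) ∪
        (Vset π i).erase (π.symm ⟨i, hi⟩) := by
  ext j
  simp only [Vset, Finset.mem_union, Finset.mem_erase, Finset.mem_filter, Finset.mem_univ,
    true_and]
  constructor
  · rintro ⟨hj1, hj2⟩
    rcases Nat.lt_succ_iff_lt_or_eq.mp hj1 with hj | hj
    · right
      refine ⟨?_, hj, by omega⟩
      intro he
      subst he
      simp at hj2
    · left
      have : j = ⟨i, hi⟩ := Fin.ext hj
      have hP : (i : ℕ) < (π ⟨i, hi⟩ : ℕ) := by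
        subst this; omega
      subst this
      rw [if_pos hP]
      simp
  · intro hj
    have key : ∀ (hne : j ≠ π.symm ⟨i, hi⟩) (hj1 : (j : ℕ) < i) (hj2 : i ≤ (π j : ℕ)),
        (j : ℕ) < i + 1 ∧ i + 1 ≤ (π j : ℕ) := by
      intro hne hj1 hj2
      refine ⟨by omega, ?_⟩
      rcases Nat.lt_or_ge i (π j) with h | h
      · omega
      · exfalso
        have h1 : (π j : ℕ) = i := by omega
        have h2 : π j = ⟨i, hi⟩ := Fin.ext h1
        exact hne (by rw [← h2]; simp)
    split at hj
    · rcases hj with hj | ⟨hne, hj1, hj2⟩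
      · simp only [Finset.mem_singleton] at hj
        subst hj
        simp only [Fin.val_mk]
        omega
      · exact key hne hj1 hj2
    · rcases hj with hj | ⟨hne, hj1, hj2⟩
      · simp at hj
      · exact key hne hj1 hj2

lemma symm_mem_Vset_iff {n : ℕ} (π : Equiv.Perm (Fin n)) (i : ℕ) (hi : i < n) :
    π.symm ⟨i, hi⟩ ∈ Vset π i ↔ (π.symm ⟨i, hi⟩ : ℕ) < i := by
  simp [Vset]

lemma Vset_card_succ {n : ℕ} (π : Equiv.Perm (Fin n)) (i : ℕ) (hi : i < n) :
    ((Vset π (i + 1)).card : ℤ) =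
      (Vset π i).card + (if (i : ℕ) < (π ⟨i, hi⟩ : ℕ) then 1 else 0)
        - (if (π.symm ⟨i, hi⟩ : ℕ) < i then 1 else 0) := by
  rw [Vset_succ π i hi]
  have hd : Disjoint (if (i : ℕ) < (π ⟨i, hi⟩ : ℕ) then ({(⟨i, hi⟩ : Fin n)} : Finset (Fin n)) else ∅)
      ((Vset π i).erase (π.symm ⟨i, hi⟩)) := by
    split
    · simp only [Finset.disjoint_singleton_left, Finset.mem_erase, Vset, Finset.mem_filter]
      rintro ⟨-, -, h, -⟩
      omega
    · exact Finset.disjoint_empty_left _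
  rw [Finset.card_union_of_disjoint hd]
  by_cases hq : (π.symm ⟨i, hi⟩ : ℕ) < i
  · have hm : π.symm ⟨i, hi⟩ ∈ Vset π i := (symm_mem_Vset_iff π i hi).mpr hq
    rw [Finset.card_erase_of_mem hm]
    have hc : 1 ≤ (Vset π i).card := Finset.card_pos.mpr ⟨_, hm⟩
    split <;> simp <;> omega
  · have hm : π.symm ⟨i, hi⟩ ∉ Vset π i := by rw [symm_mem_Vset_iff π i hi]; exact hq
    rw [Finset.erase_eq_of_notMem hm]
    split <;> simp [hq] <;> omega

lemma symm_fix_iff {n : ℕ} (π : Equiv.Perm (Fin n)) (x : Fin n) :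
    (π x : ℕ) = (x : ℕ) ↔ (π.symm x : ℕ) = (x : ℕ) := by
  constructor <;> intro h
  · have h2 : π x = x := Fin.ext h
    rw [← h2, Equiv.symm_apply_apply, h2]
  · have h2 : π.symm x = x := Fin.ext h
    have h3 := congrArg π h2
    rw [Equiv.apply_symm_apply] at h3
    rw [← h3]

lemma moveRule_step {n : ℕ} (π : Equiv.Perm (Fin n)) (x : Fin n) :
    Move.step (moveRule π x) =
      (if (x : ℕ) < (π x : ℕ) then 1 else 0) -
        (if (π.symm x : ℕ) < (x : ℕ) then 1 else 0) := by
  have hfix := symm_fix_iff π x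
  unfold moveRule
  by_cases hP : (x : ℕ) < (π x : ℕ) <;> by_cases hQ : (π.symm x : ℕ) < (x : ℕ)
  · have hu : ¬((x : ℕ) < (π x : ℕ) ∧ (x : ℕ) < (π.symm x : ℕ)) := by omega
    have hd : ¬((π x : ℕ) < (x : ℕ) ∧ (π.symm x : ℕ) < (x : ℕ)) := by omega
    rw [if_neg hu, if_neg hd, if_pos hP, if_pos hQ]
    norm_num [Move.step]
  · have hs : (x : ℕ) < (π.symm x : ℕ) := by omega
    rw [if_pos ⟨hP, hs⟩, if_pos hP, if_neg hQ]
    norm_num [Move.step]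
  · have hp : (π x : ℕ) < (x : ℕ) := by omega
    rw [if_neg (by omega : ¬((x : ℕ) < (π x : ℕ) ∧ (x : ℕ) < (π.symm x : ℕ))),
      if_pos ⟨hp, hQ⟩, if_neg hP, if_pos hQ]
    norm_num [Move.step]
  · rw [if_neg (by omega : ¬((x : ℕ) < (π x : ℕ) ∧ (x : ℕ) < (π.symm x : ℕ))),
      if_neg (by omega : ¬((π x : ℕ) < (x : ℕ) ∧ (π.symm x : ℕ) < (x : ℕ))), if_neg hP, if_neg hQ]
    norm_num [Move.step]

lemma heightAt_toPath {n : ℕ} (π : Equiv.Perm (Fin n)) (i : ℕ) :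
    heightAt (toPath π) i = (Vset π i).card := by
  induction i with
  | zero => simp [heightAt_zero, Vset_zero]
  | succ i ih =>
    by_cases hi : i < n
    · rw [heightAt_succ, toPath_getElem π i hi, Vset_card_succ π i hi, ih]
      simp only [Option.elim_some]
      rw [moveRule_step]
      ring
    · push_neg at hi
      rw [heightAt_succ, ih, Vset_of_le π (le_trans hi (Nat.le_succ i)), Vset_of_le π hi]
      have : (toPath π)[i]? = none := by
        rw [List.getElem?_eq_none]
        rw [toPath_length]; exact hi
      rw [this]
      simp

lemma Vset_symm_card {n : ℕ} (π : Equiv.Perm (Fin n)) (i : ℕ) :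
    (Vset π.symm i).card = (Vset π i).card := by
  classical
  have hsplit : ∀ σ : Equiv.Perm (Fin n),
      (Vset σ i).card + (Finset.univ.filter fun j : Fin n => (j : ℕ) < i ∧ (σ j : ℕ) < i).card =
        (Finset.univ.filter fun j : Fin n => (j : ℕ) < i).card := by
    intro σ
    rw [← Finset.card_union_of_disjoint]
    · congr 1
      ext j
      simp only [Vset, Finset.mem_union, Finset.mem_filter, Finset.mem_univ, true_and]
      omega
    · simp only [Finset.disjoint_left, Vset, Finset.mem_filter, Finset.mem_univ, true_and]
      omega
  have hL : (Finset.univ.filter fun j : Fin n => (j : ℕ) < i ∧ (π j : ℕ) < i).card =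
      (Finset.univ.filter fun j : Fin n => (j : ℕ) < i ∧ (π.symm j : ℕ) < i).card := by
    apply Finset.card_bij (fun j _ => π j)
    · intro a ha
      simp only [Finset.mem_filter, Finset.mem_univ, true_and] at ha ⊢
      rw [Equiv.symm_apply_apply]
      exact ⟨ha.2, ha.1⟩
    · intro a _ b _ hab
      exact π.injective hab
    · intro b hb
      simp only [Finset.mem_filter, Finset.mem_univ, true_and] at hb
      refine ⟨π.symm b, ?_, by simp⟩
      simp only [Finset.mem_filter, Finset.mem_univ, true_and, Equiv.apply_symm_apply]
      exact ⟨hb.2, hb.1⟩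
  have h1 := hsplit π
  have h2 := hsplit π.symm
  omega

lemma sum_Vset_card {n : ℕ} (π : Equiv.Perm (Fin n)) :
    ∑ i ∈ Finset.range (n + 1), (Vset π i).card = ∑ j : Fin n, ((π j : ℕ) - (j : ℕ)) := by
  have h1 : ∀ i, (Vset π i).card = ∑ j : Fin n, if (j : ℕ) < i ∧ i ≤ (π j : ℕ) then 1 else 0 := by
    intro i
    rw [Vset, Finset.card_filter]
  simp_rw [h1]
  rw [Finset.sum_comm]
  apply Finset.sum_congr rfl
  intro j _
  rw [← Finset.card_filter]
  have : (Finset.range (n + 1)).filter (fun i => (j : ℕ) < i ∧ i ≤ (π j : ℕ)) =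
      Finset.Ioc (j : ℕ) (π j : ℕ) := by
    ext i
    simp only [Finset.mem_filter, Finset.mem_range, Finset.mem_Ioc]
    have := (π j).isLt
    omega
  rw [this, Nat.card_Ioc]

lemma two_mul_area_toPath {n : ℕ} (π : Equiv.Perm (Fin n)) :
    2 * area (toPath π) = totalDisp π := by
  have hlen : (toPath π).length = n := toPath_length π
  have harea : area (toPath π) = ((∑ i ∈ Finset.range (n + 1), (Vset π i).card : ℕ) : ℤ) := by
    rw [area, hlen, Nat.cast_sum]
    apply Finset.sum_congr rfl
    intro i _
    rw [heightAt_toPath]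
  have hsymm : ∑ j : Fin n, ((π.symm j : ℕ) - (j : ℕ)) = ∑ j : Fin n, ((j : ℕ) - (π j : ℕ)) := by
    rw [← Equiv.sum_comp π (fun j => ((π.symm j : ℕ) - (j : ℕ)))]
    simp
  calc 2 * area (toPath π)
      = ((∑ i ∈ Finset.range (n + 1), (Vset π i).card : ℕ) : ℤ)
        + ((∑ i ∈ Finset.range (n + 1), (Vset π.symm i).card : ℕ) : ℤ) := by
        rw [harea, two_mul]
        congr 2
        exact Finset.sum_congr rfl fun i _ => (Vset_symm_card π i).symm
    _ = ((∑ j : Fin n, ((π j : ℕ) - (j : ℕ)) : ℕ) : ℤ)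
        + ((∑ j : Fin n, ((j : ℕ) - (π j : ℕ)) : ℕ) : ℤ) := by
        rw [sum_Vset_card π, sum_Vset_card π.symm, hsymm]
    _ = totalDisp π := by
        rw [totalDisp, ← Nat.cast_add, ← Finset.sum_add_distrib, Nat.cast_sum]
        apply Finset.sum_congr rfl
        intro j _
        have := (π j).isLt
        have := j.isLt
        rcases le_total ((π j : ℕ)) ((j : ℕ)) with h | h
        · rw [abs_of_nonpos (by push_cast; omega)]
          push_cast
          omega
        · rw [abs_of_nonneg (by push_cast; omega)]
          push_cast
          omega

lemma toPath_isMotzkin {n : ℕ} (π : Equiv.Perm (Fin n)) : IsMotzkin (toPath π) := by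
  constructor
  · intro i
    rw [heightAt_toPath]
    positivity
  · rw [toPath_length, heightAt_toPath, Vset_of_le π le_rfl]
    simp

lemma heightAt_append (t : List Move) (m : Move) {i : ℕ} (h : i ≤ t.length) :
    heightAt (t ++ [m]) i = heightAt t i := by
  rw [heightAt, heightAt, List.take_append_of_le_length h]

lemma heightAt_concat (t : List Move) (m : Move) :
    heightAt (t ++ [m]) (t.length + 1) = heightAt t t.length + m.step := by
  rw [heightAt_succ, heightAt_append t m le_rfl]
  congr 1
  rw [List.getElem?_concat_length]
  rfl

lemma prodUD (w : List Move) (hw : ∀ i, 0 ≤ heightAt w i) :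
    (∏ i ∈ Finset.range w.length, if w[i]? = some U then heightAt w (i + 1) else 1)
      = (∏ i ∈ Finset.range w.length, if w[i]? = some D then heightAt w i else 1)
        * ((heightAt w w.length).toNat.factorial : ℤ) := by
  induction w using List.reverseRecOn with
  | nil => simp [heightAt_zero]
  | append_singleton t m ih =>
    have hwt : ∀ i, 0 ≤ heightAt t i := by
      intro i
      rcases le_or_gt i t.length with h | h
      · rw [← heightAt_append t m h]; exact hw i
      · rw [heightAt_of_len_le t h.le, ← heightAt_append t m le_rfl]; exact hw t.length
    have hlen : (t ++ [m]).length = t.length + 1 := by simp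
    have hgetlt : ∀ i < t.length, (t ++ [m])[i]? = t[i]? := by
      intro i hi
      rw [List.getElem?_append_left hi]
    have hU : (∏ i ∈ Finset.range t.length, if (t ++ [m])[i]? = some U then heightAt (t ++ [m]) (i + 1) else 1)
        = ∏ i ∈ Finset.range t.length, if t[i]? = some U then heightAt t (i + 1) else 1 := by
      apply Finset.prod_congr rfl
      intro i hi
      rw [Finset.mem_range] at hi
      rw [hgetlt i hi, heightAt_append t m (by omega)]
    have hD : (∏ i ∈ Finset.range t.length, if (t ++ [m])[i]? = some D then heightAt (t ++ [m]) i else 1)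
        = ∏ i ∈ Finset.range t.length, if t[i]? = some D then heightAt t i else 1 := by
      apply Finset.prod_congr rfl
      intro i hi
      rw [Finset.mem_range] at hi
      rw [hgetlt i hi, heightAt_append t m (by omega)]
    have hlast : (t ++ [m])[t.length]? = some m := List.getElem?_concat_length
    set e := heightAt t t.length with he
    have he0 : 0 ≤ e := hwt t.length
    rw [hlen, Finset.prod_range_succ, Finset.prod_range_succ, hU, hD, hlast,
      heightAt_concat, heightAt_append t m le_rfl, ← he]
    cases m
    · -- U
      have h1 : (e + Move.step U).toNat = e.toNat + 1 := by
        simp only [Move.step]; omega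
      rw [ih hwt]
      simp only [reduceCtorEq, Option.some.injEq, reduceIte, h1, Nat.factorial_succ]
      have : (e + Move.step U) = (e.toNat : ℤ) + 1 := by simp only [Move.step]; omega
      rw [this]
      push_cast
      ring
    · -- H
      have h1 : (e + Move.step H).toNat = e.toNat := by simp only [Move.step]; omega
      rw [ih hwt]
      simp only [reduceCtorEq, Option.some.injEq, reduceIte, h1]
      ring
    · -- D
      have he1 : 1 ≤ e := by
        have := hw (t.length + 1)
        rw [heightAt_concat] at this
        simp only [Move.step] at this
        omega
      have h1 : (e + Move.step D).toNat = e.toNat - 1 := by simp only [Move.step]; omega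
      rw [ih hwt]
      simp only [reduceCtorEq, Option.some.injEq, reduceIte, h1]
      have h2 : e.toNat = (e.toNat - 1) + 1 := by omega
      have h3 : (e.toNat : ℤ) = e := Int.toNat_of_nonneg he0
      rw [h2, Nat.factorial_succ, mul_one]
      have h4 : ((e.toNat - 1 + 1) : ℕ) = (e : ℤ).toNat := by omega
      push_cast [h4, h3]
      ring

lemma weight_eq_prod_sq (mz : List Move) (hmz : IsMotzkin mz) :
    weight mz = ∏ i ∈ Finset.range mz.length,
      ((if mz[i]? = some D then heightAt mz i else 1) * (if mz[i]? = some D then heightAt mz i else 1)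
        * (if mz[i]? = some H then 2 * heightAt mz i + 1 else 1)) := by
  have hsplit : weight mz =
      (∏ i ∈ Finset.range mz.length, if mz[i]? = some U then heightAt mz (i + 1) else 1)
        * ((∏ i ∈ Finset.range mz.length, if mz[i]? = some D then heightAt mz i else 1)
          * (∏ i ∈ Finset.range mz.length, if mz[i]? = some H then 2 * heightAt mz i + 1 else 1)) := by
    rw [weight, ← Finset.prod_mul_distrib, ← Finset.prod_mul_distrib]
    apply Finset.prod_congr rfl
    intro i hi
    rw [Finset.mem_range] at hi
    have : mz[i]? = some mz[i] := List.getElem?_eq_getElem hi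
    rw [moveWeight, this]
    cases mz[i] <;> simp
  rw [hsplit, prodUD mz hmz.1, hmz.2]
  simp only [Int.toNat_zero, Nat.factorial_zero, Nat.cast_one, mul_one]
  rw [← Finset.prod_mul_distrib, ← Finset.prod_mul_distrib]
  apply Finset.prod_congr rfl
  intro i _
  ring

section RankAPI
variable {n : ℕ}

def rankIn (s : Finset (Fin n)) (x : Fin n) : ℕ := (s.sort (· ≤ ·)).idxOf x

def nthIn (s : Finset (Fin n)) (k : ℕ) (fb : Fin n) : Fin n := (s.sort (· ≤ ·)).getD k fb

lemma rankIn_lt_card {s : Finset (Fin n)} {x : Fin n} (hx : x ∈ s) : rankIn s x < s.card := by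
  rw [rankIn, ← Finset.length_sort (· ≤ ·)]
  exact List.idxOf_lt_length_iff.mpr ((Finset.mem_sort _).mpr hx)

lemma nthIn_rankIn {s : Finset (Fin n)} {x : Fin n} (hx : x ∈ s) (fb : Fin n) :
    nthIn s (rankIn s x) fb = x := by
  rw [nthIn, rankIn]
  have h : (s.sort (· ≤ ·)).idxOf x < (s.sort (· ≤ ·)).length :=
    List.idxOf_lt_length_iff.mpr ((Finset.mem_sort _).mpr hx)
  rw [List.getD_eq_getElem _ _ h]
  exact List.getElem_idxOf h

lemma nthIn_mem {s : Finset (Fin n)} {k : ℕ} (hk : k < s.card) (fb : Fin n) :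
    nthIn s k fb ∈ s := by
  rw [nthIn]
  have h : k < (s.sort (· ≤ ·)).length := by rwa [Finset.length_sort]
  rw [List.getD_eq_getElem _ _ h]
  exact (Finset.mem_sort _).mp (List.getElem_mem h)

lemma rankIn_nthIn {s : Finset (Fin n)} {k : ℕ} (hk : k < s.card) (fb : Fin n) :
    rankIn s (nthIn s k fb) = k := by
  rw [nthIn, rankIn]
  have h : k < (s.sort (· ≤ ·)).length := by rwa [Finset.length_sort]
  rw [List.getD_eq_getElem _ _ h]
  exact (Finset.sort_nodup _ _).idxOf_getElem k h

end RankAPI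

section Machine
variable {n : ℕ}

def hN (mz : List Move) (i : ℕ) : ℕ := (heightAt mz i).toNat

def cN (mz : List Move) (i : ℕ) : ℕ :=
  match mz[i]? with
  | some Move.U => 1
  | some Move.H => 2 * hN mz i + 1
  | some Move.D => hN mz i * hN mz i
  | none => 1

def Apend (f : Fin n → Option (Fin n)) (i : ℕ) : Finset (Fin n) :=
  Finset.univ.filter fun j => (j : ℕ) < i ∧ f j = none

def Bpend (f : Fin n → Option (Fin n)) (i : ℕ) : Finset (Fin n) :=
  Finset.univ.filter fun k => (k : ℕ) < i ∧ ∀ j, f j ≠ some k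

@[simp] lemma mem_Apend {f : Fin n → Option (Fin n)} {i : ℕ} {j : Fin n} :
    j ∈ Apend f i ↔ (j : ℕ) < i ∧ f j = none := by
  simp [Apend]

@[simp] lemma mem_Bpend {f : Fin n → Option (Fin n)} {i : ℕ} {k : Fin n} :
    k ∈ Bpend f i ↔ (k : ℕ) < i ∧ ∀ j, f j ≠ some k := by
  simp [Bpend]

def stepf (mz : List Move) (i : Fin n) (c : ℕ) (f : Fin n → Option (Fin n)) :
    Fin n → Option (Fin n) :=
  match mz[(i : ℕ)]? with
  | some Move.H =>
      if c < hN mz i then Function.update f (nthIn (Apend f i) c i) (some i)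
      else if c < 2 * hN mz i then
        Function.update f i (some (nthIn (Bpend f i) (c - hN mz i) i))
      else Function.update f i (some i)
  | some Move.D =>
      Function.update
        (Function.update f (nthIn (Apend f i) (c / hN mz i) i) (some i)) i
        (some (nthIn (Bpend f i) (c % hN mz i) i))
  | _ => f

def stateAt (mz : List Move) (a : ℕ → ℕ) : ℕ → Fin n → Option (Fin n)
  | 0 => fun _ => none
  | (i + 1) =>
      if hi : i < n then stepf mz ⟨i, hi⟩ (a i) (stateAt mz a i) else stateAt mz a i

/-- Description of a single decode step. -/
def StepDesc (mz : List Move) (i : ℕ) (hi : i < n) (c : ℕ)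
    (f f' : Fin n → Option (Fin n)) : Prop :=
  (mz[i]? = some Move.U ∧ f' = f) ∨
  (mz[i]? = some Move.H ∧ c < hN mz i ∧
    ∃ j0 ∈ Apend f i, rankIn (Apend f i) j0 = c ∧
      f' = Function.update f j0 (some ⟨i, hi⟩)) ∨
  (mz[i]? = some Move.H ∧ hN mz i ≤ c ∧ c < 2 * hN mz i ∧
    ∃ k0 ∈ Bpend f i, rankIn (Bpend f i) k0 = c - hN mz i ∧
      f' = Function.update f ⟨i, hi⟩ (some k0)) ∨
  (mz[i]? = some Move.H ∧ c = 2 * hN mz i ∧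
    f' = Function.update f ⟨i, hi⟩ (some ⟨i, hi⟩)) ∨
  (mz[i]? = some Move.D ∧ 0 < hN mz i ∧ c < hN mz i * hN mz i ∧
    ∃ j0 ∈ Apend f i, ∃ k0 ∈ Bpend f i,
      rankIn (Apend f i) j0 = c / hN mz i ∧ rankIn (Bpend f i) k0 = c % hN mz i ∧
      f' = Function.update (Function.update f j0 (some ⟨i, hi⟩)) ⟨i, hi⟩ (some k0))

lemma stepDesc_of (mz : List Move) {i : ℕ} (hi : i < n) (hlen : mz.length = n)
    {c : ℕ} {f : Fin n → Option (Fin n)}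
    (hA : (Apend f i).card = hN mz i) (hB : (Bpend f i).card = hN mz i)
    (hval : c < cN mz i) :
    StepDesc mz i hi c f (stepf mz ⟨i, hi⟩ c f) := by
  have hget : mz[i]? = some mz[i] := List.getElem?_eq_getElem (by omega)
  cases hm : mz[i] with
  | U =>
    left
    rw [hm] at hget
    refine ⟨hget, ?_⟩
    show stepf mz ⟨i, hi⟩ c f = f
    rw [stepf]
    simp only [hget]
  | H =>
    rw [hm] at hget
    simp only [cN, hget] at hval
    have hstep : stepf mz ⟨i, hi⟩ c f =
        (if c < hN mz i then Function.update f (nthIn (Apend f i) c ⟨i, hi⟩) (some ⟨i, hi⟩)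
          else if c < 2 * hN mz i then
            Function.update f ⟨i, hi⟩ (some (nthIn (Bpend f i) (c - hN mz i) ⟨i, hi⟩))
          else Function.update f ⟨i, hi⟩ (some ⟨i, hi⟩)) := by
      rw [stepf]
      simp only [hget]
    by_cases h1 : c < hN mz i
    · right; left
      refine ⟨hget, h1, nthIn (Apend f i) c ⟨i, hi⟩, nthIn_mem (by omega) _, rankIn_nthIn (by omega) _, ?_⟩
      rw [hstep, if_pos h1]
    · by_cases h2 : c < 2 * hN mz i
      · right; right; left
        refine ⟨hget, by omega, h2, nthIn (Bpend f i) (c - hN mz i) ⟨i, hi⟩,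
          nthIn_mem (by omega) _, rankIn_nthIn (by omega) _, ?_⟩
        rw [hstep, if_neg h1, if_pos h2]
      · right; right; right; left
        refine ⟨hget, by omega, ?_⟩
        rw [hstep, if_neg h1, if_neg h2]
  | D =>
    rw [hm] at hget
    simp only [cN, hget] at hval
    have hpos : 0 < hN mz i := by
      rcases Nat.eq_zero_or_pos (hN mz i) with h | h
      · rw [h] at hval; omega
      · exact h
    right; right; right; right
    refine ⟨hget, hpos, hval, nthIn (Apend f i) (c / hN mz i) ⟨i, hi⟩,
      nthIn_mem (by rw [hA]; exact Nat.div_lt_of_lt_mul hval) _,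
      nthIn (Bpend f i) (c % hN mz i) ⟨i, hi⟩,
      nthIn_mem (by rw [hB]; exact Nat.mod_lt _ hpos) _,
      rankIn_nthIn (by rw [hA]; exact Nat.div_lt_of_lt_mul hval) _,
      rankIn_nthIn (by rw [hB]; exact Nat.mod_lt _ hpos) _, ?_⟩
    show stepf mz ⟨i, hi⟩ c f = _
    rw [stepf]
    simp only [hget]


lemma Apend_update (f : Fin n → Option (Fin n)) (x v : Fin n) (t : ℕ) :
    Apend (Function.update f x (some v)) t = (Apend f t).erase x := by
  ext j
  simp only [mem_Apend, Finset.mem_erase, Function.update_apply]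
  constructor
  · rintro ⟨h1, h2⟩
    split at h2
    · exact absurd h2 (by simp)
    · exact ⟨by assumption, h1, h2⟩
  · rintro ⟨h1, h2, h3⟩
    exact ⟨h2, by rw [if_neg h1]; exact h3⟩

lemma Bpend_update (f : Fin n → Option (Fin n)) {x : Fin n} (v : Fin n) (t : ℕ)
    (hx : f x = none) :
    Bpend (Function.update f x (some v)) t = (Bpend f t).erase v := by
  ext k
  simp only [mem_Bpend, Finset.mem_erase, Function.update_apply]
  constructor
  · rintro ⟨h1, h2⟩
    have hv := h2 x
    rw [if_pos rfl] at hv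
    refine ⟨fun he => hv (by rw [he]), h1, fun j => ?_⟩
    by_cases hj : j = x
    · rw [hj, hx]; simp
    · have := h2 j
      rwa [if_neg hj] at this
  · rintro ⟨h1, h2, h3⟩
    refine ⟨h2, fun j => ?_⟩
    by_cases hj : j = x
    · rw [if_pos hj]
      intro he
      injection he with he'
      exact h1 he'.symm
    · rw [if_neg hj]
      exact h3 j

lemma Apend_succ_self {f : Fin n → Option (Fin n)} {i : ℕ} (hi : i < n)
    (hnone : f ⟨i, hi⟩ = none) :
    Apend f (i + 1) = insert ⟨i, hi⟩ (Apend f i) := by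
  ext j
  simp only [mem_Apend, Finset.mem_insert]
  constructor
  · rintro ⟨h1, h2⟩
    rcases Nat.lt_succ_iff_lt_or_eq.mp h1 with h | h
    · exact Or.inr ⟨h, h2⟩
    · exact Or.inl (Fin.ext h)
  · rintro (rfl | ⟨h1, h2⟩)
    · exact ⟨Nat.lt_succ_self i, hnone⟩
    · exact ⟨by omega, h2⟩

lemma Bpend_succ_self {f : Fin n → Option (Fin n)} {i : ℕ} (hi : i < n)
    (hfree : ∀ j, f j ≠ some ⟨i, hi⟩) :
    Bpend f (i + 1) = insert ⟨i, hi⟩ (Bpend f i) := by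
  ext k
  simp only [mem_Bpend, Finset.mem_insert]
  constructor
  · rintro ⟨h1, h2⟩
    rcases Nat.lt_succ_iff_lt_or_eq.mp h1 with h | h
    · exact Or.inr ⟨h, h2⟩
    · exact Or.inl (Fin.ext h)
  · rintro (rfl | ⟨h1, h2⟩)
    · exact ⟨Nat.lt_succ_self i, hfree⟩
    · exact ⟨by omega, h2⟩

lemma inj_update {f : Fin n → Option (Fin n)} {x v : Fin n}
    (hinj : ∀ j j' w, f j = some w → f j' = some w → j = j')
    (hfree : ∀ j, f j ≠ some v) :
    ∀ j j' w, Function.update f x (some v) j = some w →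
      Function.update f x (some v) j' = some w → j = j' := by
  intro j j' w hj hj'
  by_cases hjx : j = x
  · by_cases hj'x : j' = x
    · rw [hjx, hj'x]
    · rw [hjx, Function.update_self] at hj
      rw [Function.update_of_ne hj'x] at hj'
      cases hj
      exact absurd hj' (hfree j')
  · rw [Function.update_of_ne hjx] at hj
    by_cases hj'x : j' = x
    · rw [hj'x, Function.update_self] at hj'
      cases hj'
      exact absurd hj (hfree j)
    · rw [Function.update_of_ne hj'x] at hj'
      exact hinj j j' w hj hj'

lemma dom_update {f : Fin n → Option (Fin n)} {i : ℕ} {x v : Fin n}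
    (hdom : ∀ j w, f j = some w → (w : ℕ) < i ∧ (j : ℕ) < i)
    (hx : (x : ℕ) < i + 1) (hv : (v : ℕ) < i + 1) :
    ∀ j w, Function.update f x (some v) j = some w → (w : ℕ) < i + 1 ∧ (j : ℕ) < i + 1 := by
  intro j w hj
  by_cases hjx : j = x
  · rw [hjx, Function.update_self] at hj
    cases hj
    rw [hjx]
    exact ⟨hv, hx⟩
  · rw [Function.update_of_ne hjx] at hj
    have := hdom j w hj
    omega

-- height step lemmas
lemma heightAt_succ' (w : List Move) (i : ℕ) :
    heightAt w (i + 1) = heightAt w i + (w[i]?.elim 0 Move.step) := by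
  rw [heightAt, heightAt, List.take_succ, List.map_append, List.sum_append]
  congr 1
  cases h : w[i]? <;> simp [h]

lemma hN_succ_U {mz : List Move} {i : ℕ} (hnn : ∀ t, 0 ≤ heightAt mz t)
    (hm : mz[i]? = some Move.U) : hN mz (i + 1) = hN mz i + 1 := by
  have h := heightAt_succ' mz i
  rw [hm] at h
  simp only [Option.elim_some, Move.step] at h
  have h1 := hnn i
  have h2 := hnn (i + 1)
  rw [hN, hN]
  omega

lemma hN_succ_H {mz : List Move} {i : ℕ} (hnn : ∀ t, 0 ≤ heightAt mz t)
    (hm : mz[i]? = some Move.H) : hN mz (i + 1) = hN mz i := by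
  have h := heightAt_succ' mz i
  rw [hm] at h
  simp only [Option.elim_some, Move.step] at h
  have h1 := hnn i
  have h2 := hnn (i + 1)
  rw [hN, hN]
  omega

lemma hN_succ_D {mz : List Move} {i : ℕ} (hnn : ∀ t, 0 ≤ heightAt mz t)
    (hm : mz[i]? = some Move.D) : hN mz i = hN mz (i + 1) + 1 := by
  have h := heightAt_succ' mz i
  rw [hm] at h
  simp only [Option.elim_some, Move.step] at h
  have h1 := hnn i
  have h2 := hnn (i + 1)
  rw [hN, hN]
  omega

/-- The decoding invariant. -/
def DInv (mz : List Move) (i : ℕ) (f : Fin n → Option (Fin n)) : Prop :=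
  (∀ j v, f j = some v → (v : ℕ) < i ∧ (j : ℕ) < i) ∧
  (∀ j j' v, f j = some v → f j' = some v → j = j') ∧
  (Apend f i).card = hN mz i ∧
  (Bpend f i).card = hN mz i

lemma dinv_step {mz : List Move} {i : ℕ} (hi : i < n) {c : ℕ}
    {f f' : Fin n → Option (Fin n)} (hnn : ∀ t, 0 ≤ heightAt mz t)
    (hd : StepDesc mz i hi c f f') (hInv : DInv mz i f) : DInv mz (i + 1) f' := by
  obtain ⟨hdom, hinj, hA, hB⟩ := hInv
  have hfnone : f ⟨i, hi⟩ = none := by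
    cases hf : f ⟨i, hi⟩ with
    | none => rfl
    | some v =>
      have := hdom _ _ hf
      simp at this
  have hfree : ∀ j, f j ≠ some ⟨i, hi⟩ := by
    intro j hj
    have := hdom _ _ hj
    simp at this
  have hAsucc := Apend_succ_self hi hfnone
  have hBsucc := Bpend_succ_self hi hfree
  have hii_nA : (⟨i, hi⟩ : Fin n) ∉ Apend f i := by
    simp only [mem_Apend]
    omega
  have hii_nB : (⟨i, hi⟩ : Fin n) ∉ Bpend f i := by
    simp only [mem_Bpend]
    omega
  rcases hd with ⟨hm, rfl⟩ | ⟨hm, hc, j0, hj0, hrk, rfl⟩ | ⟨hm, hc1, hc2, k0, hk0, hrk, rfl⟩ |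
    ⟨hm, hc, rfl⟩ | ⟨hm, hpos, hc, j0, hj0, k0, hk0, hrkA, hrkB, rfl⟩
  · -- U
    refine ⟨fun j v hj => by have := hdom j v hj; omega, hinj, ?_, ?_⟩
    · rw [hAsucc, Finset.card_insert_of_notMem hii_nA, hA, hN_succ_U hnn hm]
    · rw [hBsucc, Finset.card_insert_of_notMem hii_nB, hB, hN_succ_U hnn hm]
  · -- H type 1
    obtain ⟨hj0lt, hj0none⟩ := mem_Apend.mp hj0
    have hj0ne : j0 ≠ ⟨i, hi⟩ := by
      intro h; rw [h] at hj0lt; simp at hj0lt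
    refine ⟨dom_update hdom (by omega) (by simp) , inj_update hinj hfree, ?_, ?_⟩
    · rw [Apend_update, hAsucc]
      have hj0mem : j0 ∈ insert (⟨i, hi⟩ : Fin n) (Apend f i) := Finset.mem_insert_of_mem hj0
      rw [Finset.card_erase_of_mem hj0mem, Finset.card_insert_of_notMem hii_nA, hA,
        hN_succ_H hnn hm]
      omega
    · rw [Bpend_update f _ _ hj0none, hBsucc, Finset.erase_insert hii_nB, hB,
        hN_succ_H hnn hm]
  · -- H type 2
    obtain ⟨hk0lt, hk0free⟩ := mem_Bpend.mp hk0
    have hk0ne : k0 ≠ ⟨i, hi⟩ := by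
      intro h; rw [h] at hk0lt; simp at hk0lt
    refine ⟨dom_update hdom (by simp) (by omega), inj_update hinj hk0free, ?_, ?_⟩
    · rw [Apend_update, hAsucc, Finset.erase_insert hii_nA, hA, hN_succ_H hnn hm]
    · rw [Bpend_update f _ _ hfnone, hBsucc]
      have hk0mem : k0 ∈ insert (⟨i, hi⟩ : Fin n) (Bpend f i) := Finset.mem_insert_of_mem hk0
      rw [Finset.card_erase_of_mem hk0mem, Finset.card_insert_of_notMem hii_nB, hB,
        hN_succ_H hnn hm]
      omega
  · -- H fix
    refine ⟨dom_update hdom (by simp) (by simp), inj_update hinj hfree, ?_, ?_⟩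
    · rw [Apend_update, hAsucc, Finset.erase_insert hii_nA, hA, hN_succ_H hnn hm]
    · rw [Bpend_update f _ _ hfnone, hBsucc, Finset.erase_insert hii_nB, hB,
        hN_succ_H hnn hm]
  · -- D
    obtain ⟨hj0lt, hj0none⟩ := mem_Apend.mp hj0
    obtain ⟨hk0lt, hk0free⟩ := mem_Bpend.mp hk0
    have hj0ne : j0 ≠ ⟨i, hi⟩ := by
      intro h; rw [h] at hj0lt; simp at hj0lt
    have hgfree : ∀ j, Function.update f j0 (some ⟨i, hi⟩) j ≠ some k0 := by
      intro j hj
      rcases eq_or_ne j j0 with rfl | hne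
      · rw [Function.update_self] at hj
        cases hj
        simp at hk0lt
      · rw [Function.update_of_ne hne] at hj
        exact hk0free j hj
    have hginone : Function.update f j0 (some ⟨i, hi⟩) ⟨i, hi⟩ = none := by
      rw [Function.update_of_ne (Ne.symm hj0ne), hfnone]
    refine ⟨?_, ?_, ?_, ?_⟩
    · intro j w hj
      by_cases hji : j = ⟨i, hi⟩
      · rw [hji, Function.update_self] at hj
        cases hj
        refine ⟨by omega, by rw [hji]; simp⟩
      · rw [Function.update_of_ne hji] at hj
        by_cases hjj0 : j = j0
        · rw [hjj0, Function.update_self] at hj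
          cases hj
          refine ⟨by simp, by rw [hjj0]; omega⟩
        · rw [Function.update_of_ne hjj0] at hj
          have := hdom j w hj
          omega
    · exact inj_update (inj_update hinj hfree) hgfree
    · rw [Apend_update, Apend_update, hAsucc]
      have hj0mem : j0 ∈ insert (⟨i, hi⟩ : Fin n) (Apend f i) := Finset.mem_insert_of_mem hj0
      have hiimem : (⟨i, hi⟩ : Fin n) ∈ (insert (⟨i, hi⟩ : Fin n) (Apend f i)).erase j0 :=
        Finset.mem_erase.mpr ⟨Ne.symm hj0ne, Finset.mem_insert_self _ _⟩
      rw [Finset.card_erase_of_mem hiimem, Finset.card_erase_of_mem hj0mem,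
        Finset.card_insert_of_notMem hii_nA, hA]
      have := hN_succ_D hnn hm
      omega
    · rw [Bpend_update _ _ _ hginone, Bpend_update f _ _ hj0none, hBsucc,
        Finset.erase_insert hii_nB, Finset.card_erase_of_mem hk0, hB]
      have := hN_succ_D hnn hm
      omega

end Machine


section Decode
variable {n : ℕ}

lemma nat_transition {P : ℕ → Prop} : ∀ {N i : ℕ}, i ≤ N → ¬ P i → P N →
    ∃ t, i ≤ t ∧ t < N ∧ ¬ P t ∧ P (t + 1) := by
  intro N
  induction N with
  | zero =>
    intro i hiN hni hP
    interval_cases i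
    exact absurd hP hni
  | succ N ih =>
    intro i hiN hni hP
    rcases Nat.lt_succ_iff_lt_or_eq.mp (Nat.lt_succ_of_le hiN) with h | h
    · by_cases hPN : P N
      · obtain ⟨t, h1, h2, h3, h4⟩ := ih (by omega) hni hPN
        exact ⟨t, h1, by omega, h3, h4⟩
      · exact ⟨N, by omega, by omega, hPN, hP⟩
    · subst h
      exact absurd hP hni

lemma stateAt_succ_eq (mz : List Move) (a : ℕ → ℕ) (i : ℕ) (hi : i < n) :
    stateAt (n := n) mz a (i + 1) = stepf mz ⟨i, hi⟩ (a i) (stateAt mz a i) := by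
  rw [stateAt, dif_pos hi]

lemma dinv_zero (mz : List Move) (a : ℕ → ℕ) : DInv (n := n) mz 0 (stateAt mz a 0) := by
  refine ⟨fun j v hj => by simp [stateAt] at hj, fun j j' v hj => by simp [stateAt] at hj, ?_, ?_⟩
  · have : Apend (stateAt (n := n) mz a 0) 0 = ∅ := by
      ext j; simp [mem_Apend]
    rw [this, Finset.card_empty, hN, heightAt_zero]
    rfl
  · have : Bpend (stateAt (n := n) mz a 0) 0 = ∅ := by
      ext j; simp [mem_Bpend]
    rw [this, Finset.card_empty, hN, heightAt_zero]
    rfl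

variable {mz : List Move} {a : ℕ → ℕ}
variable (hlen : mz.length = n) (hnn : ∀ t, 0 ≤ heightAt mz t)
  (hval : ∀ i, i < n → a i < cN mz i)

include hlen hnn hval in
lemma dinv_at : ∀ i, i ≤ n → DInv mz i (stateAt (n := n) mz a i) := by
  intro i
  induction i with
  | zero => intro _; exact dinv_zero mz a
  | succ i ih =>
    intro hi1
    have hi : i < n := by omega
    have hInv := ih (by omega)
    rw [stateAt_succ_eq mz a i hi]
    exact dinv_step hi hnn (stepDesc_of mz hi hlen hInv.2.2.1 hInv.2.2.2 (hval i hi)) hInv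

include hlen hnn hval in
lemma stepDesc_at (i : ℕ) (hi : i < n) :
    StepDesc mz i hi (a i) (stateAt (n := n) mz a i) (stateAt mz a (i + 1)) := by
  have hInv := dinv_at hlen hnn hval i (by omega)
  rw [stateAt_succ_eq mz a i hi]
  exact stepDesc_of mz hi hlen hInv.2.2.1 hInv.2.2.2 (hval i hi)

lemma step_mono {i : ℕ} {hi : i < n} {c : ℕ} {f f' : Fin n → Option (Fin n)}
    (hd : StepDesc mz i hi c f f')
    (hdom : ∀ j v, f j = some v → (v : ℕ) < i ∧ (j : ℕ) < i) :
    ∀ j v, f j = some v → f' j = some v := by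
  intro j v hj
  have hjne : j ≠ ⟨i, hi⟩ := by
    intro h
    have := hdom j v hj
    rw [h] at this
    simp at this
  rcases hd with ⟨hm, rfl⟩ | ⟨hm, hc, j0, hj0, hrk, rfl⟩ | ⟨hm, hc1, hc2, k0, hk0, hrk, rfl⟩ |
    ⟨hm, hc, rfl⟩ | ⟨hm, hpos, hc, j0, hj0, k0, hk0, hrkA, hrkB, rfl⟩
  · exact hj
  · have hne : j ≠ j0 := by
      intro h
      rw [h, (mem_Apend.mp hj0).2] at hj
      cases hj
    rw [Function.update_of_ne hne]
    exact hj
  · rw [Function.update_of_ne hjne]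
    exact hj
  · rw [Function.update_of_ne hjne]
    exact hj
  · have hne : j ≠ j0 := by
      intro h
      rw [h, (mem_Apend.mp hj0).2] at hj
      cases hj
    rw [Function.update_of_ne hjne, Function.update_of_ne hne]
    exact hj

include hlen hnn hval in
lemma state_mono {i t : ℕ} (hit : i ≤ t) (htn : t ≤ n) {j v : Fin n}
    (hj : stateAt (n := n) mz a i j = some v) : stateAt mz a t j = some v := by
  induction t with
  | zero =>
    have : i = 0 := by omega
    rw [← this]
    exact hj
  | succ t ih =>
    by_cases h : i ≤ t
    · have ht : t < n := by omega
      have hprev : stateAt (n := n) mz a t j = some v := ih h (by omega)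
      exact step_mono (stepDesc_at hlen hnn hval t ht) (dinv_at hlen hnn hval t (by omega)).1 j v hprev
    · have h2 : i = t + 1 := by omega
      rw [← h2]; exact hj

lemma step_new_pos {i : ℕ} {hi : i < n} {c : ℕ} {f f' : Fin n → Option (Fin n)}
    (hd : StepDesc mz i hi c f f') {j v : Fin n}
    (hnone : f j = none) (hsome : f' j = some v) :
    (v = ⟨i, hi⟩ ∧ (j : ℕ) < i) ∨ j = ⟨i, hi⟩ := by
  rcases hd with ⟨hm, rfl⟩ | ⟨hm, hc, j0, hj0, hrk, rfl⟩ | ⟨hm, hc1, hc2, k0, hk0, hrk, rfl⟩ |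
    ⟨hm, hc, rfl⟩ | ⟨hm, hpos, hc, j0, hj0, k0, hk0, hrkA, hrkB, rfl⟩
  · rw [hnone] at hsome; cases hsome
  · by_cases hjj : j = j0
    · rw [hjj, Function.update_self] at hsome
      cases hsome
      exact Or.inl ⟨rfl, hjj ▸ (mem_Apend.mp hj0).1⟩
    · rw [Function.update_of_ne hjj, hnone] at hsome; cases hsome
  · by_cases hjj : j = ⟨i, hi⟩
    · exact Or.inr hjj
    · rw [Function.update_of_ne hjj, hnone] at hsome; cases hsome
  · by_cases hjj : j = ⟨i, hi⟩
    · exact Or.inr hjj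
    · rw [Function.update_of_ne hjj, hnone] at hsome; cases hsome
  · by_cases hjj : j = ⟨i, hi⟩
    · exact Or.inr hjj
    · rw [Function.update_of_ne hjj] at hsome
      by_cases hjj0 : j = j0
      · rw [hjj0, Function.update_self] at hsome
        cases hsome
        exact Or.inl ⟨rfl, hjj0 ▸ (mem_Apend.mp hj0).1⟩
      · rw [Function.update_of_ne hjj0, hnone] at hsome; cases hsome

end Decode

section Decode2
variable {n : ℕ} {mz : List Move} {a : ℕ → ℕ}
variable (hlen : mz.length = n) (hnn : ∀ t, 0 ≤ heightAt mz t)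
  (hval : ∀ i, i < n → a i < cN mz i) (hend : heightAt mz mz.length = 0)

include hlen hnn hval hend in
lemma state_total : ∀ j : Fin n, stateAt (n := n) mz a n j ≠ none := by
  intro j hj
  have hInv := dinv_at hlen hnn hval n le_rfl
  have hzero : hN mz n = 0 := by
    rw [hN, ← hlen, hend]
    rfl
  have hcard := hInv.2.2.1
  rw [hzero, Finset.card_eq_zero] at hcard
  have : j ∈ Apend (stateAt (n := n) mz a n) n := mem_Apend.mpr ⟨j.isLt, hj⟩
  rw [hcard] at this
  exact absurd this (Finset.notMem_empty j)

noncomputable def decF (hT : ∀ j : Fin n, stateAt (n := n) mz a n j ≠ none) : Fin n → Fin n :=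
  fun j => (stateAt mz a n j).get (Option.ne_none_iff_isSome.mp (hT j))

lemma decF_some (hT : ∀ j : Fin n, stateAt (n := n) mz a n j ≠ none) (j : Fin n) :
    stateAt mz a n j = some (decF hT j) := (Option.some_get _).symm

include hlen hnn hval in
lemma decF_injective (hT : ∀ j : Fin n, stateAt (n := n) mz a n j ≠ none) :
    Function.Injective (decF hT) := by
  intro j j' h
  have hInv := dinv_at hlen hnn hval n le_rfl
  exact hInv.2.1 j j' _ (decF_some hT j) (h ▸ decF_some hT j')

noncomputable def decPerm (hlen : mz.length = n) (hnn : ∀ t, 0 ≤ heightAt mz t)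
    (hval : ∀ i, i < n → a i < cN mz i)
    (hT : ∀ j : Fin n, stateAt (n := n) mz a n j ≠ none) : Equiv.Perm (Fin n) :=
  Equiv.ofBijective (decF hT)
    (Finite.injective_iff_bijective.mp (decF_injective hlen hnn hval hT))

include hlen hnn hval in
lemma decPerm_some (hT : ∀ j : Fin n, stateAt (n := n) mz a n j ≠ none) (j : Fin n) :
    stateAt mz a n j = some (decPerm hlen hnn hval hT j) := decF_some hT j

include hlen hnn hval in
lemma decPerm_eq_of (hT : ∀ j : Fin n, stateAt (n := n) mz a n j ≠ none) {j v : Fin n}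
    (hj : stateAt mz a n j = some v) : decPerm hlen hnn hval hT j = v := by
  have := decPerm_some hlen hnn hval hT j
  rw [hj] at this
  exact (Option.some_inj.mp this).symm

include hlen hnn hval in
lemma later_V (hT : ∀ j : Fin n, stateAt (n := n) mz a n j ≠ none) {i : ℕ} (hi : i ≤ n)
    {j : Fin n} (hji : (j : ℕ) < i) (hnone : stateAt mz a i j = none) :
    i ≤ (decPerm hlen hnn hval hT j : ℕ) := by
  obtain ⟨t, ht1, ht2, ht3, ht4⟩ := nat_transition (P := fun t => stateAt (n := n) mz a t j ≠ none)
    hi (by simpa using hnone) (hT j)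
  push_neg at ht3
  cases hw : stateAt (n := n) mz a (t + 1) j with
  | none => exact absurd hw ht4
  | some w =>
    rcases step_new_pos (stepDesc_at hlen hnn hval t ht2) ht3 hw with ⟨hw1, _⟩ | hj2
    · have hfn : stateAt (n := n) mz a n j = some w :=
        state_mono hlen hnn hval (by omega) le_rfl hw
      rw [decPerm_eq_of hlen hnn hval hT hfn, hw1]
      simpa using ht1
    · rw [hj2] at hji
      simp at hji
      omega
include hlen hnn hval in
lemma later_W (hT : ∀ j : Fin n, stateAt (n := n) mz a n j ≠ none) {i : ℕ} (hi : i ≤ n)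
    {k : Fin n} (hki : (k : ℕ) < i) (hfree : ∀ j, stateAt mz a i j ≠ some k) :
    i ≤ (((decPerm hlen hnn hval hT).symm k : Fin n) : ℕ) := by
  set π := decPerm hlen hnn hval hT with hπ
  set j := π.symm k with hjdef
  have hπj : π j = k := by rw [hjdef]; simp
  have hfn : stateAt (n := n) mz a n j = some k := by
    have := decPerm_some hlen hnn hval hT j
    rwa [hπj] at this
  obtain ⟨t, ht1, ht2, ht3, ht4⟩ := nat_transition (P := fun t => stateAt (n := n) mz a t j = some k)
    hi (hfree j) hfn
  have ht3' : stateAt (n := n) mz a t j = none := by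
    cases hw : stateAt (n := n) mz a t j with
    | none => rfl
    | some w =>
      have := state_mono hlen hnn hval (by omega) le_rfl hw
      rw [hfn] at this
      cases this
      exact absurd hw ht3
  rcases step_new_pos (stepDesc_at hlen hnn hval t ht2) ht3' ht4 with ⟨hw1, _⟩ | hj2
  · rw [hw1] at hki
    simp at hki
    omega
  · rw [hj2]
    simpa using ht1

include hlen hnn hval in
lemma Apend_eq_Vset (hT : ∀ j : Fin n, stateAt (n := n) mz a n j ≠ none) {i : ℕ} (hi : i ≤ n) :
    Apend (stateAt (n := n) mz a i) i = Vset (decPerm hlen hnn hval hT) i := by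
  ext j
  simp only [mem_Apend, Vset, Finset.mem_filter, Finset.mem_univ, true_and]
  constructor
  · rintro ⟨h1, h2⟩
    exact ⟨h1, later_V hlen hnn hval hT hi h1 h2⟩
  · rintro ⟨h1, h2⟩
    refine ⟨h1, ?_⟩
    cases hw : stateAt (n := n) mz a i j with
    | none => rfl
    | some w =>
      have hfn := state_mono hlen hnn hval hi le_rfl hw
      have := decPerm_eq_of hlen hnn hval hT hfn
      have hdom := (dinv_at hlen hnn hval i hi).1 j w hw
      rw [← this] at hdom
      omega

include hlen hnn hval in
lemma Bpend_eq_Wset (hT : ∀ j : Fin n, stateAt (n := n) mz a n j ≠ none) {i : ℕ} (hi : i ≤ n) :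
    Bpend (stateAt (n := n) mz a i) i = Vset (decPerm hlen hnn hval hT).symm i := by
  ext k
  simp only [mem_Bpend, Vset, Finset.mem_filter, Finset.mem_univ, true_and]
  constructor
  · rintro ⟨h1, h2⟩
    exact ⟨h1, later_W hlen hnn hval hT hi h1 h2⟩
  · rintro ⟨h1, h2⟩
    refine ⟨h1, fun j hj => ?_⟩
    have hfn := state_mono hlen hnn hval hi le_rfl hj
    have heq := decPerm_eq_of hlen hnn hval hT hfn
    have hdom := (dinv_at hlen hnn hval i hi).1 j k hj
    have : (decPerm hlen hnn hval hT).symm k = j := by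
      rw [← heq]; simp
    rw [this] at h2
    omega

end Decode2

section Decode3
variable {n : ℕ} {mz : List Move} {a : ℕ → ℕ}
variable (hlen : mz.length = n) (hnn : ∀ t, 0 ≤ heightAt mz t)
  (hval : ∀ i, i < n → a i < cN mz i)

include hlen hnn hval in
lemma toPath_decPerm (hT : ∀ j : Fin n, stateAt (n := n) mz a n j ≠ none) :
    toPath (decPerm hlen hnn hval hT) = mz := by
  set π := decPerm hlen hnn hval hT with hπdef
  apply List.ext_getElem?
  intro i
  by_cases hi : i < n
  · rw [toPath_getElem π i hi]
    have hdom := (dinv_at hlen hnn hval i (le_of_lt hi)).1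
    have hii : ((⟨i, hi⟩ : Fin n) : ℕ) = i := rfl
    have hfnone : stateAt (n := n) mz a i ⟨i, hi⟩ = none := by
      cases hw : stateAt (n := n) mz a i ⟨i, hi⟩ with
      | none => rfl
      | some w =>
        have := hdom _ _ hw
        simp at this
    rcases stepDesc_at hlen hnn hval i hi with ⟨hm, heq⟩ | ⟨hm, hc, j0, hj0, hrk, heq⟩ |
      ⟨hm, hc1, hc2, k0, hk0, hrk, heq⟩ | ⟨hm, hc, heq⟩ |
      ⟨hm, hpos, hc, j0, hj0, k0, hk0, hrkA, hrkB, heq⟩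
    · -- U
      have hV : i + 1 ≤ (π ⟨i, hi⟩ : ℕ) := by
        apply later_V hlen hnn hval hT (by omega) (by rw [hii]; omega)
        rw [heq]; exact hfnone
      have hW : i + 1 ≤ (π.symm ⟨i, hi⟩ : ℕ) := by
        apply later_W hlen hnn hval hT (by omega) (by rw [hii]; omega)
        intro j hj
        rw [heq] at hj
        have := hdom j _ hj
        simp at this
      rw [hm, moveRule, if_pos ⟨by omega, by omega⟩]
    · -- H type 1
      obtain ⟨hj0lt, hj0none⟩ := mem_Apend.mp hj0
      have hj0ne : (⟨i, hi⟩ : Fin n) ≠ j0 := by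
        intro h; rw [← h] at hj0lt; simp at hj0lt
      have hπj0 : π j0 = ⟨i, hi⟩ := by
        apply decPerm_eq_of hlen hnn hval hT
        apply state_mono hlen hnn hval (by omega : i + 1 ≤ n) le_rfl
        rw [heq, Function.update_self]
      have hsymm : π.symm ⟨i, hi⟩ = j0 := by
        rw [Equiv.symm_apply_eq, hπj0]
      have hV : i + 1 ≤ (π ⟨i, hi⟩ : ℕ) := by
        apply later_V hlen hnn hval hT (by omega) (by rw [hii]; omega)
        rw [heq, Function.update_of_ne hj0ne]
        exact hfnone
      rw [hm, moveRule, if_neg (by rw [hsymm]; omega), if_neg (by omega)]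
    · -- H type 2
      obtain ⟨hk0lt, hk0free⟩ := mem_Bpend.mp hk0
      have hπii : π ⟨i, hi⟩ = k0 := by
        apply decPerm_eq_of hlen hnn hval hT
        apply state_mono hlen hnn hval (by omega : i + 1 ≤ n) le_rfl
        rw [heq, Function.update_self]
      have hW : i + 1 ≤ (π.symm ⟨i, hi⟩ : ℕ) := by
        apply later_W hlen hnn hval hT (by omega) (by rw [hii]; omega)
        intro j hj
        rw [heq] at hj
        by_cases hji : j = ⟨i, hi⟩
        · rw [hji, Function.update_self] at hj
          injection hj with hj'
          rw [hj'] at hk0lt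
          simp at hk0lt
        · rw [Function.update_of_ne hji] at hj
          have := hdom j _ hj
          simp at this
      rw [hm, moveRule, if_neg (by rw [hπii]; omega), if_neg (by omega)]
    · -- H fix
      have hπii : π ⟨i, hi⟩ = ⟨i, hi⟩ := by
        apply decPerm_eq_of hlen hnn hval hT
        apply state_mono hlen hnn hval (by omega : i + 1 ≤ n) le_rfl
        rw [heq, Function.update_self]
      have hsymm : π.symm ⟨i, hi⟩ = ⟨i, hi⟩ := by
        rw [Equiv.symm_apply_eq, hπii]
      rw [hm, moveRule, if_neg (by rw [hπii]; omega), if_neg (by rw [hπii]; omega)]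
    · -- D
      obtain ⟨hj0lt, hj0none⟩ := mem_Apend.mp hj0
      obtain ⟨hk0lt, hk0free⟩ := mem_Bpend.mp hk0
      have hj0ne : j0 ≠ (⟨i, hi⟩ : Fin n) := by
        intro h; rw [h] at hj0lt; simp at hj0lt
      have hπii : π ⟨i, hi⟩ = k0 := by
        apply decPerm_eq_of hlen hnn hval hT
        apply state_mono hlen hnn hval (by omega : i + 1 ≤ n) le_rfl
        rw [heq, Function.update_self]
      have hπj0 : π j0 = ⟨i, hi⟩ := by
        apply decPerm_eq_of hlen hnn hval hT
        apply state_mono hlen hnn hval (by omega : i + 1 ≤ n) le_rfl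
        rw [heq, Function.update_of_ne hj0ne, Function.update_self]
      have hsymm : π.symm ⟨i, hi⟩ = j0 := by
        rw [Equiv.symm_apply_eq, hπj0]
      rw [hm, moveRule, if_neg (by rw [hπii]; omega),
        if_pos ⟨by rw [hπii]; omega, by rw [hsymm]; omega⟩]
  · have h1 : (toPath π)[i]? = none := by
      rw [List.getElem?_eq_none]
      rw [toPath_length]
      omega
    have h2 : mz[i]? = none := by
      rw [List.getElem?_eq_none]
      omega
    rw [h1, h2]

end Decode3

section Encode
variable {n : ℕ}

def encode (mz : List Move) (π : Equiv.Perm (Fin n)) (x : Fin n) : ℕ :=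
  if (π x : ℕ) < (x : ℕ) ∧ (π.symm x : ℕ) < (x : ℕ) then
    rankIn (Vset π (x : ℕ)) (π.symm x) * hN mz (x : ℕ) + rankIn (Vset π.symm (x : ℕ)) (π x)
  else if (x : ℕ) < (π x : ℕ) ∧ (π.symm x : ℕ) < (x : ℕ) then
    rankIn (Vset π (x : ℕ)) (π.symm x)
  else if (π x : ℕ) < (x : ℕ) ∧ (x : ℕ) < (π.symm x : ℕ) then
    hN mz (x : ℕ) + rankIn (Vset π.symm (x : ℕ)) (π x)
  else if (π x : ℕ) = (x : ℕ) then 2 * hN mz (x : ℕ)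
  else 0

lemma Vset_card_eq {mz : List Move} {π : Equiv.Perm (Fin n)} (hpath : toPath π = mz) (i : ℕ) :
    (Vset π i).card = hN mz i := by
  rw [hN, ← hpath, heightAt_toPath]
  simp

lemma Vset_symm_card_eq {mz : List Move} {π : Equiv.Perm (Fin n)} (hpath : toPath π = mz)
    (i : ℕ) : (Vset π.symm i).card = hN mz i := by
  rw [Vset_symm_card, Vset_card_eq hpath]

lemma symm_mem_Vset {π : Equiv.Perm (Fin n)} {x : Fin n} (h : (π.symm x : ℕ) < (x : ℕ)) :
    π.symm x ∈ Vset π (x : ℕ) := by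
  simp only [Vset, Finset.mem_filter, Finset.mem_univ, true_and, Equiv.apply_symm_apply]
  exact ⟨h, le_rfl⟩

lemma apply_mem_Wset {π : Equiv.Perm (Fin n)} {x : Fin n} (h : (π x : ℕ) < (x : ℕ)) :
    π x ∈ Vset π.symm (x : ℕ) := by
  simp only [Vset, Finset.mem_filter, Finset.mem_univ, true_and, Equiv.symm_apply_apply]
  exact ⟨h, le_rfl⟩

lemma encode_valid {mz : List Move} {π : Equiv.Perm (Fin n)} (hpath : toPath π = mz)
    (x : Fin n) : encode mz π x < cN mz (x : ℕ) := by
  have hm : mz[(x : ℕ)]? = some (moveRule π x) := by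
    rw [← hpath]; exact toPath_getElem π (x : ℕ) x.isLt
  have hfix := symm_fix_iff π x
  rw [encode]
  split_ifs with h1 h2 h3 h4
  · -- D
    have hmr : moveRule π x = Move.D := by
      rw [moveRule, if_neg (by omega), if_pos h1]
    rw [hmr] at hm
    simp only [cN, hm]
    have hr1 : rankIn (Vset π (x : ℕ)) (π.symm x) < hN mz (x : ℕ) := by
      rw [← Vset_card_eq hpath]
      exact rankIn_lt_card (symm_mem_Vset h1.2)
    have hr2 : rankIn (Vset π.symm (x : ℕ)) (π x) < hN mz (x : ℕ) := by
      rw [← Vset_symm_card_eq hpath]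
      exact rankIn_lt_card (apply_mem_Wset h1.1)
    calc rankIn (Vset π (x : ℕ)) (π.symm x) * hN mz (x : ℕ) + rankIn (Vset π.symm (x : ℕ)) (π x)
        < (rankIn (Vset π (x : ℕ)) (π.symm x) + 1) * hN mz (x : ℕ) := by ring_nf; omega
      _ ≤ hN mz (x : ℕ) * hN mz (x : ℕ) := Nat.mul_le_mul_right _ (by omega)
  · -- H type 1
    have hmr : moveRule π x = Move.H := by
      rw [moveRule, if_neg (by omega), if_neg (by omega)]
    rw [hmr] at hm
    simp only [cN, hm]
    have hr1 : rankIn (Vset π (x : ℕ)) (π.symm x) < hN mz (x : ℕ) := by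
      rw [← Vset_card_eq hpath]
      exact rankIn_lt_card (symm_mem_Vset h2.2)
    omega
  · -- H type 2
    have hmr : moveRule π x = Move.H := by
      rw [moveRule, if_neg (by omega), if_neg (by omega)]
    rw [hmr] at hm
    simp only [cN, hm]
    have hr2 : rankIn (Vset π.symm (x : ℕ)) (π x) < hN mz (x : ℕ) := by
      rw [← Vset_symm_card_eq hpath]
      exact rankIn_lt_card (apply_mem_Wset h3.1)
    omega
  · -- H fix
    have hmr : moveRule π x = Move.H := by
      rw [moveRule, if_neg (by omega), if_neg (by omega)]
    rw [hmr] at hm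
    simp only [cN, hm]
    omega
  · -- U
    have hmr : moveRule π x = Move.U := by
      rw [moveRule, if_pos (by omega)]
    rw [hmr] at hm
    simp only [cN, hm]
    omega

end Encode

section RoundTrip
variable {n : ℕ}

lemma stepf_U (mz : List Move) (i : Fin n) (c : ℕ) (f : Fin n → Option (Fin n))
    (hm : mz[(i : ℕ)]? = some Move.U) : stepf mz i c f = f := by
  show (match mz[(i : ℕ)]? with
    | some Move.H =>
        if c < hN mz i then Function.update f (nthIn (Apend f i) c i) (some i)
        else if c < 2 * hN mz i then
          Function.update f i (some (nthIn (Bpend f i) (c - hN mz i) i))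
        else Function.update f i (some i)
    | some Move.D =>
        Function.update
          (Function.update f (nthIn (Apend f i) (c / hN mz i) i) (some i)) i
          (some (nthIn (Bpend f i) (c % hN mz i) i))
    | _ => f) = f
  rw [hm]

lemma stepf_H (mz : List Move) (i : Fin n) (c : ℕ) (f : Fin n → Option (Fin n))
    (hm : mz[(i : ℕ)]? = some Move.H) : stepf mz i c f =
      (if c < hN mz i then Function.update f (nthIn (Apend f i) c i) (some i)
        else if c < 2 * hN mz i then
          Function.update f i (some (nthIn (Bpend f i) (c - hN mz i) i))
        else Function.update f i (some i)) := by
  show (match mz[(i : ℕ)]? with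
    | some Move.H =>
        if c < hN mz i then Function.update f (nthIn (Apend f i) c i) (some i)
        else if c < 2 * hN mz i then
          Function.update f i (some (nthIn (Bpend f i) (c - hN mz i) i))
        else Function.update f i (some i)
    | some Move.D =>
        Function.update
          (Function.update f (nthIn (Apend f i) (c / hN mz i) i) (some i)) i
          (some (nthIn (Bpend f i) (c % hN mz i) i))
    | _ => f) = _
  rw [hm]

lemma stepf_D (mz : List Move) (i : Fin n) (c : ℕ) (f : Fin n → Option (Fin n))
    (hm : mz[(i : ℕ)]? = some Move.D) : stepf mz i c f =
      Function.update
        (Function.update f (nthIn (Apend f i) (c / hN mz i) i) (some i)) i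
        (some (nthIn (Bpend f i) (c % hN mz i) i)) := by
  show (match mz[(i : ℕ)]? with
    | some Move.H =>
        if c < hN mz i then Function.update f (nthIn (Apend f i) c i) (some i)
        else if c < 2 * hN mz i then
          Function.update f i (some (nthIn (Bpend f i) (c - hN mz i) i))
        else Function.update f i (some i)
    | some Move.D =>
        Function.update
          (Function.update f (nthIn (Apend f i) (c / hN mz i) i) (some i)) i
          (some (nthIn (Bpend f i) (c % hN mz i) i))
    | _ => f) = _
  rw [hm]

end RoundTrip

section RoundTrip2
variable {n : ℕ}

lemma step_formula_other {π : Equiv.Perm (Fin n)} {i : ℕ} (hi : i < n) {j : Fin n}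
    (hj : j ≠ ⟨i, hi⟩) (hpj : π j ≠ ⟨i, hi⟩) :
    (if (j : ℕ) < i ∧ ((π j) : ℕ) < i then some (π j) else none)
      = (if (j : ℕ) < i + 1 ∧ ((π j) : ℕ) < i + 1 then some (π j) else none) := by
  have h1 : (j : ℕ) ≠ i := fun h => hj (Fin.ext h)
  have h2 : ((π j) : ℕ) ≠ i := fun h => hpj (Fin.ext h)
  by_cases hc : (j : ℕ) < i ∧ ((π j) : ℕ) < i
  · rw [if_pos hc, if_pos ⟨by omega, by omega⟩]
  · rw [if_neg hc, if_neg (by omega)]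

lemma decode_encode_state {mz : List Move} {π : Equiv.Perm (Fin n)} (hpath : toPath π = mz)
    (aE : ℕ → ℕ) (haE : ∀ t (h : t < n), aE t = encode mz π ⟨t, h⟩) :
    ∀ i, i ≤ n → stateAt (n := n) mz aE i
      = fun j : Fin n => if (j : ℕ) < i ∧ ((π j) : ℕ) < i then some (π j) else none := by
  intro i
  induction i with
  | zero =>
    intro _
    funext j
    rw [if_neg (by omega)]
    rfl
  | succ i ih =>
    intro hi1
    have hi : i < n := by omega
    have hf := ih (by omega)
    rw [stateAt_succ_eq mz aE i hi, hf]
    set f : Fin n → Option (Fin n) :=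
      fun j : Fin n => if (j : ℕ) < i ∧ ((π j) : ℕ) < i then some (π j) else none with hfdef
    have hcval : aE i = encode mz π ⟨i, hi⟩ := haE i hi
    have hm : mz[i]? = some (moveRule π ⟨i, hi⟩) := by
      rw [← hpath]; exact toPath_getElem π i hi
    have hA : Apend f i = Vset π i := by
      ext j
      simp only [mem_Apend, Vset, Finset.mem_filter, Finset.mem_univ, true_and, hfdef]
      constructor
      · rintro ⟨hj1, hj2⟩
        refine ⟨hj1, ?_⟩
        by_cases hc : (j : ℕ) < i ∧ ((π j) : ℕ) < i
        · rw [if_pos hc] at hj2; cases hj2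
        · omega
      · rintro ⟨hj1, hj2⟩
        exact ⟨hj1, by rw [if_neg (by omega)]⟩
    have hB : Bpend f i = Vset π.symm i := by
      ext k
      simp only [mem_Bpend, Vset, Finset.mem_filter, Finset.mem_univ, true_and, hfdef]
      constructor
      · rintro ⟨hk1, hk2⟩
        refine ⟨hk1, ?_⟩
        by_contra hlt
        push_neg at hlt
        have := hk2 (π.symm k)
        rw [if_pos ⟨hlt, by simp [hk1]⟩] at this
        simp at this
      · rintro ⟨hk1, hk2⟩
        refine ⟨hk1, fun j => ?_⟩
        by_cases hc : (j : ℕ) < i ∧ ((π j) : ℕ) < i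
        · rw [if_pos hc]
          intro he
          injection he with he'
          rw [← he', Equiv.symm_apply_apply] at hk2
          omega
        · rw [if_neg hc]
          simp
    have hAcard : (Apend f i).card = hN mz i := by rw [hA, Vset_card_eq hpath]
    have hBcard : (Bpend f i).card = hN mz i := by rw [hB, Vset_symm_card_eq hpath]
    have hii : ((⟨i, hi⟩ : Fin n) : ℕ) = i := rfl
    have hfix := symm_fix_iff π ⟨i, hi⟩
    have hfii : f ⟨i, hi⟩ = none := by rw [hfdef]; simp only; rw [if_neg (by omega)]
    have hpsymm : π (π.symm ⟨i, hi⟩) = ⟨i, hi⟩ := Equiv.apply_symm_apply π _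
    by_cases h1 : ((π ⟨i, hi⟩ : Fin n) : ℕ) < i ∧ ((π.symm ⟨i, hi⟩ : Fin n) : ℕ) < i
    · -- D step
      have hmr : moveRule π ⟨i, hi⟩ = Move.D := by
        rw [moveRule, if_neg (by omega), if_pos (by omega)]
      rw [hmr] at hm
      have henc : aE i = rankIn (Vset π i) (π.symm ⟨i, hi⟩) * hN mz i
          + rankIn (Vset π.symm i) (π ⟨i, hi⟩) := by
        rw [hcval, encode, if_pos (by omega)]
      have hr1 : rankIn (Vset π i) (π.symm ⟨i, hi⟩) < hN mz i := by
        have := rankIn_lt_card (symm_mem_Vset h1.2)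
        rwa [Vset_card_eq hpath] at this
      have hr2 : rankIn (Vset π.symm i) (π ⟨i, hi⟩) < hN mz i := by
        have := rankIn_lt_card (apply_mem_Wset h1.1)
        rwa [Vset_symm_card_eq hpath] at this
      have hdiv : aE i / hN mz i = rankIn (Vset π i) (π.symm ⟨i, hi⟩) := by
        rw [henc, Nat.add_comm, Nat.add_mul_div_right _ _ (by omega : 0 < hN mz i),
          Nat.div_eq_of_lt hr2, Nat.zero_add]
      have hmod : aE i % hN mz i = rankIn (Vset π.symm i) (π ⟨i, hi⟩) := by
        rw [henc, Nat.add_comm, Nat.add_mul_mod_self_right, Nat.mod_eq_of_lt hr2]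
      rw [stepf_D mz ⟨i, hi⟩ (aE i) f hm]
      simp only [hii]
      have hswap1 : nthIn (Vset π i) (rankIn (Vset π i) (π.symm ⟨i, hi⟩)) (⟨i, hi⟩ : Fin n)
          = π.symm ⟨i, hi⟩ := nthIn_rankIn (symm_mem_Vset h1.2) _
      have hswap2 : nthIn (Vset π.symm i) (rankIn (Vset π.symm i) (π ⟨i, hi⟩)) (⟨i, hi⟩ : Fin n)
          = π ⟨i, hi⟩ := nthIn_rankIn (apply_mem_Wset h1.1) _
      rw [hdiv, hmod, hA, hB, hswap1, hswap2]
      funext j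
      show _ = if (j : ℕ) < i + 1 ∧ ((π j) : ℕ) < i + 1 then some (π j) else none
      by_cases hji : j = ⟨i, hi⟩
      · rw [hji, Function.update_self, if_pos ⟨by omega, by omega⟩]
      · rw [Function.update_of_ne hji]
        by_cases hjs : j = π.symm ⟨i, hi⟩
        · have hcond : ((π.symm ⟨i, hi⟩ : Fin n) : ℕ) < i + 1 ∧
              ((π (π.symm ⟨i, hi⟩) : Fin n) : ℕ) < i + 1 := by
            refine ⟨by omega, ?_⟩
            rw [hpsymm]
            omega
          rw [hjs, Function.update_self, if_pos hcond, hpsymm]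
        · rw [Function.update_of_ne hjs]
          have hpj : π j ≠ ⟨i, hi⟩ := fun h => hjs (by rw [← h]; simp)
          rw [hfdef]
          exact step_formula_other hi hji hpj
    · by_cases h2 : i < ((π ⟨i, hi⟩ : Fin n) : ℕ) ∧ ((π.symm ⟨i, hi⟩ : Fin n) : ℕ) < i
      · -- H type 1
        have hmr : moveRule π ⟨i, hi⟩ = Move.H := by
          rw [moveRule, if_neg (by omega), if_neg (by omega)]
        rw [hmr] at hm
        have henc : aE i = rankIn (Vset π i) (π.symm ⟨i, hi⟩) := by
          rw [hcval, encode, if_neg (by omega), if_pos (by omega)]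
        have hr1 : rankIn (Vset π i) (π.symm ⟨i, hi⟩) < hN mz i := by
          have := rankIn_lt_card (symm_mem_Vset h2.2)
          rwa [Vset_card_eq hpath] at this
        rw [stepf_H mz ⟨i, hi⟩ (aE i) f hm]
        simp only [hii]
        have hswap1 : nthIn (Vset π i) (rankIn (Vset π i) (π.symm ⟨i, hi⟩)) (⟨i, hi⟩ : Fin n)
            = π.symm ⟨i, hi⟩ := nthIn_rankIn (symm_mem_Vset h2.2) _
        rw [if_pos (show aE i < hN mz i by omega), henc, hA, hswap1]
        funext j
        show _ = if (j : ℕ) < i + 1 ∧ ((π j) : ℕ) < i + 1 then some (π j) else none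
        by_cases hjs : j = π.symm ⟨i, hi⟩
        · have hcond : ((π.symm ⟨i, hi⟩ : Fin n) : ℕ) < i + 1 ∧
              ((π (π.symm ⟨i, hi⟩) : Fin n) : ℕ) < i + 1 := by
            refine ⟨by omega, ?_⟩
            rw [hpsymm]
            omega
          rw [hjs, Function.update_self, if_pos hcond, hpsymm]
        · rw [Function.update_of_ne hjs]
          by_cases hji : j = ⟨i, hi⟩
          · rw [hji, hfii, if_neg (by omega)]
          · have hpj : π j ≠ ⟨i, hi⟩ := fun h => hjs (by rw [← h]; simp)
            rw [hfdef]
            exact step_formula_other hi hji hpj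
      · by_cases h3 : ((π ⟨i, hi⟩ : Fin n) : ℕ) < i ∧ i < ((π.symm ⟨i, hi⟩ : Fin n) : ℕ)
        · -- H type 2
          have hmr : moveRule π ⟨i, hi⟩ = Move.H := by
            rw [moveRule, if_neg (by omega), if_neg (by omega)]
          rw [hmr] at hm
          have henc : aE i = hN mz i + rankIn (Vset π.symm i) (π ⟨i, hi⟩) := by
            rw [hcval, encode, if_neg (by omega), if_neg (by omega), if_pos (by omega)]
          have hr2 : rankIn (Vset π.symm i) (π ⟨i, hi⟩) < hN mz i := by
            have := rankIn_lt_card (apply_mem_Wset h3.1)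
            rwa [Vset_symm_card_eq hpath] at this
          rw [stepf_H mz ⟨i, hi⟩ (aE i) f hm]
          simp only [hii]
          have hswap2 : nthIn (Vset π.symm i) (rankIn (Vset π.symm i) (π ⟨i, hi⟩)) (⟨i, hi⟩ : Fin n)
              = π ⟨i, hi⟩ := nthIn_rankIn (apply_mem_Wset h3.1) _
          have hsub : aE i - hN mz i = rankIn (Vset π.symm i) (π ⟨i, hi⟩) := by omega
          rw [if_neg (by omega), if_pos (by omega), hsub, hB, hswap2]
          funext j
          show _ = if (j : ℕ) < i + 1 ∧ ((π j) : ℕ) < i + 1 then some (π j) else none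
          by_cases hji : j = ⟨i, hi⟩
          · rw [hji, Function.update_self, if_pos ⟨by omega, by omega⟩]
          · rw [Function.update_of_ne hji]
            by_cases hjs : j = π.symm ⟨i, hi⟩
            · have hjgt : i < (j : ℕ) := by rw [hjs]; omega
              rw [hfdef]
              simp only
              rw [if_neg (by omega), if_neg (by omega)]
            · have hpj : π j ≠ ⟨i, hi⟩ := fun h => hjs (by rw [← h]; simp)
              rw [hfdef]
              exact step_formula_other hi hji hpj
        · by_cases h4 : ((π ⟨i, hi⟩ : Fin n) : ℕ) = i
          · -- H fix
            have hsymmv : ((π.symm ⟨i, hi⟩ : Fin n) : ℕ) = i := by omega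
            have hfixeq : π ⟨i, hi⟩ = ⟨i, hi⟩ := Fin.ext h4
            have hsymmeq : π.symm ⟨i, hi⟩ = ⟨i, hi⟩ := Fin.ext hsymmv
            have hmr : moveRule π ⟨i, hi⟩ = Move.H := by
              rw [moveRule, if_neg (by omega), if_neg (by omega)]
            rw [hmr] at hm
            have henc : aE i = 2 * hN mz i := by
              rw [hcval, encode, if_neg (by omega), if_neg (by omega), if_neg (by omega),
                if_pos (by omega)]
            rw [stepf_H mz ⟨i, hi⟩ (aE i) f hm]
            simp only [hii]
            rw [if_neg (by omega), if_neg (by omega)]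
            funext j
            show _ = if (j : ℕ) < i + 1 ∧ ((π j) : ℕ) < i + 1 then some (π j) else none
            by_cases hji : j = ⟨i, hi⟩
            · rw [hji, Function.update_self, if_pos ⟨by omega, by omega⟩, hfixeq]
            · rw [Function.update_of_ne hji]
              have hpj : π j ≠ ⟨i, hi⟩ := by
                intro h
                exact hji (by rw [← hsymmeq, ← h]; simp)
              rw [hfdef]
              exact step_formula_other hi hji hpj
          · -- U
            have hU : i < ((π ⟨i, hi⟩ : Fin n) : ℕ) ∧ i < ((π.symm ⟨i, hi⟩ : Fin n) : ℕ) := by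
              omega
            have hmr : moveRule π ⟨i, hi⟩ = Move.U := by
              rw [moveRule, if_pos (by omega)]
            rw [hmr] at hm
            rw [stepf_U mz ⟨i, hi⟩ (aE i) f hm]
            funext j
            show _ = if (j : ℕ) < i + 1 ∧ ((π j) : ℕ) < i + 1 then some (π j) else none
            by_cases hji : j = ⟨i, hi⟩
            · rw [hji, hfii, if_neg (by omega)]
            · by_cases hjs : j = π.symm ⟨i, hi⟩
              · have hjgt : i < (j : ℕ) := by rw [hjs]; omega
                rw [hfdef]
                simp only
                rw [if_neg (by omega), if_neg (by omega)]
              · have hpj : π j ≠ ⟨i, hi⟩ := fun h => hjs (by rw [← h]; simp)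
                rw [hfdef]
                exact step_formula_other hi hji hpj

end RoundTrip2

section EncodeDecode
variable {n : ℕ} {mz : List Move} {a : ℕ → ℕ}
variable (hlen : mz.length = n) (hnn : ∀ t, 0 ≤ heightAt mz t)
  (hval : ∀ i, i < n → a i < cN mz i)

include hlen hnn hval in
lemma encode_decode (hT : ∀ j : Fin n, stateAt (n := n) mz a n j ≠ none)
    (i : ℕ) (hi : i < n) :
    encode mz (decPerm hlen hnn hval hT) ⟨i, hi⟩ = a i := by
  set π := decPerm hlen hnn hval hT with hπdef
  have hdom := (dinv_at hlen hnn hval i (le_of_lt hi)).1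
  have hii : ((⟨i, hi⟩ : Fin n) : ℕ) = i := rfl
  have hfnone : stateAt (n := n) mz a i ⟨i, hi⟩ = none := by
    cases hw : stateAt (n := n) mz a i ⟨i, hi⟩ with
    | none => rfl
    | some w =>
      have := hdom _ _ hw
      simp at this
  have hA := Apend_eq_Vset hlen hnn hval hT (le_of_lt hi)
  have hB := Bpend_eq_Wset hlen hnn hval hT (le_of_lt hi)
  rw [← hπdef] at hA hB
  rcases stepDesc_at hlen hnn hval i hi with ⟨hm, heq⟩ | ⟨hm, hc, j0, hj0, hrk, heq⟩ |
    ⟨hm, hc1, hc2, k0, hk0, hrk, heq⟩ | ⟨hm, hc, heq⟩ |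
    ⟨hm, hpos, hc, j0, hj0, k0, hk0, hrkA, hrkB, heq⟩
  · -- U
    have hV : i + 1 ≤ (π ⟨i, hi⟩ : ℕ) := by
      apply later_V hlen hnn hval hT (by omega) (by rw [hii]; omega)
      rw [heq]; exact hfnone
    have hW : i + 1 ≤ (π.symm ⟨i, hi⟩ : ℕ) := by
      apply later_W hlen hnn hval hT (by omega) (by rw [hii]; omega)
      intro j hj
      rw [heq] at hj
      have := hdom j _ hj
      simp at this
    have hcN : cN mz i = 1 := by simp only [cN, hm]
    have := hval i hi
    rw [encode, if_neg (by omega), if_neg (by omega), if_neg (by omega), if_neg (by omega)]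
    omega
  · -- H type 1
    obtain ⟨hj0lt, hj0none⟩ := mem_Apend.mp hj0
    have hj0ne : (⟨i, hi⟩ : Fin n) ≠ j0 := by
      intro h; rw [← h] at hj0lt; simp at hj0lt
    have hπj0 : π j0 = ⟨i, hi⟩ := by
      apply decPerm_eq_of hlen hnn hval hT
      apply state_mono hlen hnn hval (by omega : i + 1 ≤ n) le_rfl
      rw [heq, Function.update_self]
    have hsymm : π.symm ⟨i, hi⟩ = j0 := by
      rw [Equiv.symm_apply_eq, hπj0]
    have hV : i + 1 ≤ (π ⟨i, hi⟩ : ℕ) := by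
      apply later_V hlen hnn hval hT (by omega) (by rw [hii]; omega)
      rw [heq, Function.update_of_ne hj0ne]
      exact hfnone
    have hsymmv : ((π.symm ⟨i, hi⟩ : Fin n) : ℕ) = (j0 : ℕ) := by rw [hsymm]
    rw [encode, if_neg (by omega), if_pos (by omega), hii, hsymm, ← hA]
    exact hrk
  · -- H type 2
    obtain ⟨hk0lt, hk0free⟩ := mem_Bpend.mp hk0
    have hπii : π ⟨i, hi⟩ = k0 := by
      apply decPerm_eq_of hlen hnn hval hT
      apply state_mono hlen hnn hval (by omega : i + 1 ≤ n) le_rfl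
      rw [heq, Function.update_self]
    have hW : i + 1 ≤ (π.symm ⟨i, hi⟩ : ℕ) := by
      apply later_W hlen hnn hval hT (by omega) (by rw [hii]; omega)
      intro j hj
      rw [heq] at hj
      by_cases hji : j = ⟨i, hi⟩
      · rw [hji, Function.update_self] at hj
        injection hj with hj'
        rw [hj'] at hk0lt
        simp at hk0lt
      · rw [Function.update_of_ne hji] at hj
        have := hdom j _ hj
        simp at this
    have hπiiv : ((π ⟨i, hi⟩ : Fin n) : ℕ) = (k0 : ℕ) := by rw [hπii]
    rw [encode, if_neg (by omega), if_neg (by omega), if_pos (by omega), hii, hπii, ← hB, hrk]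
    omega
  · -- H fix
    have hπii : π ⟨i, hi⟩ = ⟨i, hi⟩ := by
      apply decPerm_eq_of hlen hnn hval hT
      apply state_mono hlen hnn hval (by omega : i + 1 ≤ n) le_rfl
      rw [heq, Function.update_self]
    have hπiiv : ((π ⟨i, hi⟩ : Fin n) : ℕ) = i := by rw [hπii]
    rw [encode, if_neg (by omega), if_neg (by omega), if_neg (by omega), if_pos (by omega), hii]
    omega
  · -- D
    obtain ⟨hj0lt, hj0none⟩ := mem_Apend.mp hj0
    obtain ⟨hk0lt, hk0free⟩ := mem_Bpend.mp hk0
    have hj0ne : j0 ≠ (⟨i, hi⟩ : Fin n) := by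
      intro h; rw [h] at hj0lt; simp at hj0lt
    have hπii : π ⟨i, hi⟩ = k0 := by
      apply decPerm_eq_of hlen hnn hval hT
      apply state_mono hlen hnn hval (by omega : i + 1 ≤ n) le_rfl
      rw [heq, Function.update_self]
    have hπj0 : π j0 = ⟨i, hi⟩ := by
      apply decPerm_eq_of hlen hnn hval hT
      apply state_mono hlen hnn hval (by omega : i + 1 ≤ n) le_rfl
      rw [heq, Function.update_of_ne hj0ne, Function.update_self]
    have hsymm : π.symm ⟨i, hi⟩ = j0 := by
      rw [Equiv.symm_apply_eq, hπj0]
    have hπiiv : ((π ⟨i, hi⟩ : Fin n) : ℕ) = (k0 : ℕ) := by rw [hπii]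
    have hsymmv : ((π.symm ⟨i, hi⟩ : Fin n) : ℕ) = (j0 : ℕ) := by rw [hsymm]
    rw [encode, if_pos (by omega), hii, hπii, hsymm, ← hA, ← hB, hrkA, hrkB]
    exact Nat.div_add_mod' _ _

end EncodeDecode

section Assemble
variable {n : ℕ}

lemma fiber_card {mz : List Move} (hlen : mz.length = n) (hmz : IsMotzkin mz) :
    Nat.card {π : Equiv.Perm (Fin n) // toPath π = mz} = ∏ i ∈ Finset.range n, cN mz i := by
  classical
  have hnn := hmz.1
  have hend := hmz.2
  let Φ : {π : Equiv.Perm (Fin n) // toPath π = mz} → ((i : Fin n) → Fin (cN mz (i : ℕ))) :=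
    fun p i => ⟨encode mz p.1 i, encode_valid p.2 i⟩
  let ab : ((i : Fin n) → Fin (cN mz (i : ℕ))) → ℕ → ℕ :=
    fun b t => if h : t < n then (b ⟨t, h⟩ : ℕ) else 0
  have hvalb : ∀ b, ∀ i, i < n → ab b i < cN mz i := by
    intro b i h
    show (if h : i < n then (b ⟨i, h⟩ : ℕ) else 0) < cN mz i
    rw [dif_pos h]
    exact (b ⟨i, h⟩).isLt
  let Ψ : ((i : Fin n) → Fin (cN mz (i : ℕ))) → {π : Equiv.Perm (Fin n) // toPath π = mz} :=
    fun b => ⟨decPerm hlen hnn (hvalb b) (state_total hlen hnn (hvalb b) hend),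
      toPath_decPerm hlen hnn (hvalb b) _⟩
  have hΨΦ : Function.LeftInverse Ψ Φ := by
    intro p
    apply Subtype.ext
    apply Equiv.ext
    intro j
    have hab : ∀ t (h : t < n), ab (Φ p) t = encode mz p.1 ⟨t, h⟩ := by
      intro t h
      show (if h' : t < n then _ else 0) = _
      rw [dif_pos h]
    have hstate := decode_encode_state p.2 (ab (Φ p)) hab n le_rfl
    have hsome : stateAt (n := n) mz (ab (Φ p)) n j = some (p.1 j) := by
      rw [hstate]
      show (if (j : ℕ) < n ∧ ((p.1 j : Fin n) : ℕ) < n then some (p.1 j) else none)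
        = some (p.1 j)
      rw [if_pos ⟨j.isLt, (p.1 j).isLt⟩]
    exact decPerm_eq_of hlen hnn (hvalb (Φ p)) _ hsome
  have hΦΨ : Function.RightInverse Ψ Φ := by
    intro b
    funext i
    apply Fin.ext
    show encode mz (decPerm hlen hnn (hvalb b) _) i = (b i : ℕ)
    have he := encode_decode hlen hnn (hvalb b) (state_total hlen hnn (hvalb b) hend)
      (i : ℕ) i.isLt
    have h1 : ((⟨(i : ℕ), i.isLt⟩ : Fin n)) = i := Fin.eta i i.isLt
    rw [h1] at he
    rw [he]
    show (if h : (i : ℕ) < n then (b ⟨(i : ℕ), h⟩ : ℕ) else 0) = (b i : ℕ)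
    rw [dif_pos i.isLt, h1]
  have hcard := Nat.card_congr (Equiv.mk Φ Ψ hΨΦ hΦΨ)
  rw [hcard, Nat.card_pi]
  have : ∀ i : Fin n, Nat.card (Fin (cN mz (i : ℕ))) = cN mz (i : ℕ) := by
    intro i
    simp [Nat.card_eq_fintype_card]
  rw [Finset.prod_congr rfl (fun i _ => this i)]
  exact (Finset.prod_range fun i => cN mz i) ▸ Fin.prod_univ_eq_prod_range (fun i => cN mz i) n

lemma weight_eq_cN {mz : List Move} (hmz : IsMotzkin mz) :
    weight mz = ∏ i ∈ Finset.range mz.length, (cN mz i : ℤ) := by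
  rw [weight_eq_prod_sq mz hmz]
  apply Finset.prod_congr rfl
  intro i hi
  rw [Finset.mem_range] at hi
  have hget : mz[i]? = some mz[i] := List.getElem?_eq_getElem hi
  have hnn := hmz.1 i
  have hcast : ((hN mz i : ℕ) : ℤ) = heightAt mz i := Int.toNat_of_nonneg hnn
  cases hm : mz[i] with
  | U =>
    rw [hm] at hget
    simp only [cN, hget, reduceCtorEq, Option.some.injEq, reduceIte]
    norm_num
  | H =>
    rw [hm] at hget
    simp only [cN, hget, reduceCtorEq, Option.some.injEq, reduceIte]
    push_cast [hcast]
    ring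
  | D =>
    rw [hm] at hget
    simp only [cN, hget, reduceCtorEq, Option.some.injEq, reduceIte]
    push_cast [hcast]
    ring

end Assemble


/-- the word associated to a permutation `π` is a Motzkin path of width `n`
and area `D(π)/2`, and for every Motzkin path `mz` of width `n` the number of permutations
mapping to `mz` is exactly `ω(mz)`. -/
theorem toPath_is_motzkin_and_fiber_card (n : ℕ) :
    (∀ π : Equiv.Perm (Fin n),
      (toPath π).length = n ∧ IsMotzkin (toPath π) ∧ 2 * area (toPath π) = totalDisp π) ∧
    (∀ mz : List Move, mz.length = n → IsMotzkin mz →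
      (Nat.card {π : Equiv.Perm (Fin n) // toPath π = mz} : ℤ) = weight mz) := by
  constructor
  · intro π
    exact ⟨toPath_length π, toPath_isMotzkin π, two_mul_area_toPath π⟩
  · intro mz hlen hmz
    rw [fiber_card hlen hmz, weight_eq_cN hmz, hlen]
    push_cast
    rfl
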